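/- Let d ≥ 5. There are numbers r = r(n,d) and c = c(d) > 0 such that if A, B ⊂ Z^d are disjoint, A ∪ B has exactly n elements, dist(A, B) ≥ r, and x is the lex element of A, then esc_{A∪B}(x) ≥ c·n^{−1/(d−2) − 0.8} and H_{A∪B}(x) ≥ c·n^{−2.2}. -/

import Mathlib

open MeasureTheory

namespace HATFormal

/-- Points of the lattice `ℤ^d`. -/
abbrev Pt (d : ℕ) := Fin d → ℤ

/-- The `2d` unit steps of the simple random walk on `ℤ^d`. -/
def Dir (d : ℕ) : Set (Pt d) :=
  {s | ∃ i : Fin d, s = Pi.single i 1 ∨ s = Pi.single i (-1)}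

/-- The position, after `t` steps, of the walk started at `x` with steps `s`. -/
def wpos (d : ℕ) (x : Pt d) {T : ℕ} (s : Fin T → Pt d) (t : ℕ) : Pt d :=
  x + ∑ i ∈ Finset.univ.filter (fun i : Fin T => (i : ℕ) < t), s i

/-- The probability of an event `P` of the first `T` steps of simple random walk on `ℤ^d`. -/
noncomputable def prob (d T : ℕ) (P : (Fin T → Pt d) → Prop) : ℝ :=
  (Nat.card {s : Fin T → Pt d // (∀ i, s i ∈ Dir d) ∧ P s} : ℝ) / ((2 * d : ℕ) : ℝ) ^ T

open Classical in
/-- `esc d A x = P_x(τ_A = ∞)` if `x ∈ A`, and `0` otherwise. -/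
noncomputable def esc (d : ℕ) (A : Set (Pt d)) (x : Pt d) : ℝ :=
  if x ∈ A then ⨅ T : ℕ, prob d T (fun s => ∀ t, 1 ≤ t → t ≤ T → wpos d x s t ∉ A) else 0

/-- The capacity of `A`. -/
noncomputable def capa (d : ℕ) (A : Set (Pt d)) : ℝ := ∑' x : A, esc d A (x : Pt d)

/-- The harmonic measure `H_A(x) = esc_A(x) / cap_A`. -/
noncomputable def harm (d : ℕ) (A : Set (Pt d)) (x : Pt d) : ℝ := esc d A x / capa d A

/-- `P_x(τ_W < ∞)`. -/
noncomputable def retProb (d : ℕ) (W : Set (Pt d)) (x : Pt d) : ℝ :=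
  ∑' t : ℕ, prob d t (fun s => 1 ≤ t ∧ wpos d x s t ∈ W ∧
    ∀ u, 1 ≤ u → u < t → wpos d x s u ∉ W)

/-- `P_x(τ_W < ∞ and S_{τ_W − 1} = y)`. -/
noncomputable def hitFrom (d : ℕ) (W : Set (Pt d)) (x y : Pt d) : ℝ :=
  ∑' t : ℕ, prob d t (fun s => 1 ≤ t ∧ wpos d x s t ∈ W ∧ wpos d x s (t - 1) = y ∧
    ∀ u, 1 ≤ u → u < t → wpos d x s u ∉ W)

/-- `P_x(τ_W < ∞ and S_{τ_W} ∈ T)`. -/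
noncomputable def firstHitIn (d : ℕ) (W T : Set (Pt d)) (x : Pt d) : ℝ :=
  ∑' t : ℕ, prob d t (fun s => 1 ≤ t ∧ wpos d x s t ∈ W ∧ wpos d x s t ∈ T ∧
    ∀ u, 1 ≤ u → u < t → wpos d x s u ∉ W)

/-- `P_x(S_{τ_W − 1} = y ∣ τ_W < ∞)`. -/
noncomputable def transP (d : ℕ) (W : Set (Pt d)) (x y : Pt d) : ℝ :=
  hitFrom d W x y / retProb d W x

/-- The Green's function of simple random walk on `ℤ^d`. -/
noncomputable def green (d : ℕ) (x : Pt d) : ℝ :=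
  ∑' t : ℕ, prob d t (fun s => wpos d x s t = 0)

/-- Configurations: finite subsets of `ℤ^d`. -/
abbrev Conf (d : ℕ) := Finset (Pt d)

/-- `p_U(x, y)`, the probability that HAT activates at `x` and transports to `y`. -/
noncomputable def pHAT (d : ℕ) (U : Conf d) (x y : Pt d) : ℝ :=
  harm d (↑U) x * transP d ((↑U : Set (Pt d)) \ {x}) x y

open Classical in
/-- The transition probabilities of HAT. -/
noncomputable def hatProb (d : ℕ) (U V : Conf d) : ℝ :=
  if V = U then ∑' z : Pt d, pHAT d U z z
  else ∑' x : Pt d, ∑' y : Pt d,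
    if x ∈ U ∧ x ≠ y ∧ V = insert y (U.erase x) then pHAT d U x y else 0

instance (d : ℕ) : MeasurableSpace (Conf d) := ⊤

/-- `μ` is the law of HAT started from `U`. -/
def IsHATLaw (d : ℕ) (U : Conf d) (μ : Measure (ℕ → Conf d)) : Prop :=
  IsProbabilityMeasure μ ∧
  ∀ (t : ℕ) (u : ℕ → Conf d),
    μ {ω | ∀ s ≤ t, ω s = u s} =
      (if u 0 = U then 1 else 0) *
        ∏ s ∈ Finset.range t, ENNReal.ofReal (hatProb d (u s) (u (s + 1)))

/-- A signed permutation plus translation of `ℤ^d`. -/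
def SymImage (d : ℕ) (σ : Equiv.Perm (Fin d)) (ε : Fin d → ℤ) (v : Pt d) (x : Pt d) : Pt d :=
  fun i => v i + ε i * x (σ i)

/-- `SymEq d U V` holds when `V = gU` for a symmetry `g` of `ℤ^d`. -/
def SymEq (d : ℕ) (U V : Conf d) : Prop :=
  ∃ (σ : Equiv.Perm (Fin d)) (ε : Fin d → ℤ) (v : Pt d),
    (∀ i, ε i = 1 ∨ ε i = -1) ∧ V = U.image (SymImage d σ ε v)

/-- Euclidean distance on `ℤ^d`. -/
noncomputable def dist0 (d : ℕ) (x y : Pt d) : ℝ :=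
  Real.sqrt (∑ i, ((x i : ℝ) - (y i : ℝ)) ^ 2)

/-- Euclidean distance between finite subsets of `ℤ^d`. -/
noncomputable def setDist (d : ℕ) (A B : Finset (Pt d)) : ℝ :=
  sInf {r : ℝ | ∃ x ∈ A, ∃ y ∈ B, r = dist0 d x y}

/-- Euclidean diameter of a finite subset of `ℤ^d`. -/
noncomputable def diam0 (d : ℕ) (A : Finset (Pt d)) : ℝ :=
  sSup {r : ℝ | ∃ x ∈ A, ∃ y ∈ A, r = dist0 d x y}

/-- Lattice (nearest-neighbor) adjacency in `ℤ^d`. -/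
def latAdj (d : ℕ) (x y : Pt d) : Prop := (∑ i, (x i - y i).natAbs) = 1

/-- Exterior lattice boundary of a set. -/
def bdry (d : ℕ) (A : Set (Pt d)) : Set (Pt d) := {z | z ∉ A ∧ ∃ w ∈ A, latAdj d z w}

/-- Non-isolated configurations: some exposed element has a lattice neighbor in the set. -/
def NonIso (d : ℕ) (U : Conf d) : Prop :=
  ∃ x ∈ U, 0 < esc d (↑U) x ∧ ∃ y ∈ U, latAdj d x y

/-- `C` is a clustering (ordered partition into nonempty clusters) of `U`. -/
def IsClusteringOf (d : ℕ) {k : ℕ} (C : Fin k → Finset (Pt d)) (U : Finset (Pt d)) : Prop :=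
  (∀ i, (C i).Nonempty) ∧ (∀ i j, i ≠ j → Disjoint (C i) (C j)) ∧
    Finset.univ.biUnion C = U

/-- `C^{≠ i}`, the union of the clusters other than `i`. -/
def others (d : ℕ) {k : ℕ} (C : Fin k → Finset (Pt d)) (i : Fin k) : Finset (Pt d) :=
  Finset.univ.biUnion fun j => if j = i then ∅ else C j

/-- The separation of a clustering. -/
noncomputable def sep (d : ℕ) {k : ℕ} (C : Fin k → Finset (Pt d)) : ℝ :=
  ⨅ i, setDist d (C i) (others d C i)

/-- `(a, b)` separated dimer-or-trimer (DOT) clusterings. -/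
def IsDOT (d : ℕ) {k : ℕ} (C : Fin k → Finset (Pt d)) (a b : ℝ) : Prop :=
  (∀ i, (C i).card = 2 ∨ (C i).card = 3) ∧ a ≤ sep d C ∧
    ∀ i, diam0 d (C i) ≤ b * Real.log (setDist d (C i) (others d C i))

/-- Clusterings with an unspecified number of clusters. -/
abbrev ClusteringS (d : ℕ) := Σ k : ℕ, Fin k → Finset (Pt d)

/-- `π(C)`, the union of the clusters of `C`. -/
def confOf (d : ℕ) (C : ClusteringS d) : Conf d := Finset.univ.biUnion C.2

/-- `C ∈ 𝒞(U, a, b)`. -/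
def InC (d : ℕ) (U : Conf d) (a b : ℝ) (C : ClusteringS d) : Prop :=
  IsClusteringOf d C.2 U ∧ IsDOT d C.2 a b

/-- `U ∈ 𝒰_{d,n}(a, b)`. -/
def InU (d n : ℕ) (a b : ℝ) (U : Conf d) : Prop :=
  U.card = n ∧ ∃ C : ClusteringS d, InC d U a b C

/-- `C` is a clustering of an `n`-element configuration. -/
def IsClusteringConf (d n : ℕ) (C : ClusteringS d) : Prop :=
  (∀ i, (C.2 i).Nonempty) ∧ (∀ i j, i ≠ j → Disjoint (C.2 i) (C.2 j)) ∧
    (confOf d C).card = n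

open Classical in
/-- One step of the natural clustering. -/
noncomputable def clustStep (d : ℕ) (Ut Ut1 : Conf d) (C : ClusteringS d) : ClusteringS d :=
  if Ut1 = Ut then C
  else if h : ∃ p : Pt d × Pt d × Fin C.1,
      Ut \ Ut1 = {p.1} ∧ Ut1 \ Ut = {p.2.1} ∧ p.1 ∈ C.2 p.2.2 then
    ⟨C.1, Function.update C.2 h.choose.2.2
      (insert h.choose.2.1 ((C.2 h.choose.2.2).erase h.choose.1))⟩
  else ⟨1, fun _ => Ut1⟩

/-- The natural clustering of the trajectory `ω` with initial clustering `C0`. -/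
noncomputable def natClust (d : ℕ) (ω : ℕ → Conf d) (C0 : ClusteringS d) : ℕ → ClusteringS d
  | 0 => C0
  | t + 1 => clustStep d (ω t) (ω (t + 1)) (natClust d ω C0 t)

/-- `a_s = s^{1/2 − n^{−100}} + 100 n`. -/
noncomputable def aSep (n s : ℕ) : ℝ :=
  (s : ℝ) ^ ((1 : ℝ) / 2 - (n : ℝ) ^ (-(100 : ℝ))) + 100 * n

/-- `C^{i, x, y}`: remove `x` from cluster `i` of `C` and add `y` to that cluster. -/
def updC (d : ℕ) (C : ClusteringS d) (i : Fin C.1) (x y : Pt d) : ClusteringS d :=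
  ⟨C.1, Function.update C.2 i (insert y ((C.2 i).erase x))⟩

open Classical in
/-- The transition probabilities of the lifting of HAT to clusterings. -/
noncomputable def liftProb (d : ℕ) (E0 E1 : ClusteringS d) : ℝ :=
  ∑' x : Pt d, ∑' y : Pt d,
    if ∃ i : Fin E0.1, x ∈ E0.2 i ∧ E1 = updC d E0 i x y
    then pHAT d (confOf d E0) x y else 0

/-- The capacity of a clustering: the sum of the capacities of its clusters. -/
noncomputable def capS (d : ℕ) (C : ClusteringS d) : ℝ := ∑ i, capa d (↑(C.2 i))

/-- `H_C(i, x) = esc_{C^i}(x) / cap_C`. -/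
noncomputable def harmS (d : ℕ) (C : ClusteringS d) (i : Fin C.1) (x : Pt d) : ℝ :=
  esc d (↑(C.2 i)) x / capS d C

/-- `q_C(i, x, y)`. -/
noncomputable def qIHAT (d : ℕ) (C : ClusteringS d) (i : Fin C.1) (x y : Pt d) : ℝ :=
  harmS d C i x * transP d ((↑(C.2 i) : Set (Pt d)) \ {x}) x y

open Classical in
/-- The transition probabilities of intracluster HAT (IHAT). -/
noncomputable def ihatProb (d : ℕ) (D E : ClusteringS d) : ℝ :=
  ∑' x : Pt d, ∑' y : Pt d, ∑ i : Fin D.1,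
    if x ∈ D.2 i ∧ E = updC d D i x y then qIHAT d D i x y else 0

instance (d : ℕ) : MeasurableSpace (ClusteringS d) := ⊤

open Classical in
/-- `μ` is the law of the lifted HAT chain started from `E0`. -/
def IsLiftLaw (d : ℕ) (E0 : ClusteringS d) (μ : Measure (ℕ → ClusteringS d)) : Prop :=
  IsProbabilityMeasure μ ∧
  ∀ (t : ℕ) (u : ℕ → ClusteringS d),
    μ {ω | ∀ s ≤ t, ω s = u s} =
      (if u 0 = E0 then 1 else 0) *
        ∏ s ∈ Finset.range t, ENNReal.ofReal (liftProb d (u s) (u (s + 1)))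

open Classical in
/-- `μ` is the law of intracluster HAT started from `D0`. -/
def IsIHATLaw (d : ℕ) (D0 : ClusteringS d) (μ : Measure (ℕ → ClusteringS d)) : Prop :=
  IsProbabilityMeasure μ ∧
  ∀ (t : ℕ) (u : ℕ → ClusteringS d),
    μ {ω | ∀ s ≤ t, ω s = u s} =
      (if u 0 = D0 then 1 else 0) *
        ∏ s ∈ Finset.range t, ENNReal.ofReal (ihatProb d (u s) (u (s + 1)))

/-- `Pairs(E0, E1)`. -/
def Pairs (d : ℕ) (E0 E1 : ClusteringS d) : Set (Pt d × Pt d) :=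
  {p | 0 < pHAT d (confOf d E0) p.1 p.2 ∧
    ∃ i : Fin E0.1, p.1 ∈ E0.2 i ∧ E1 = updC d E0 i p.1 p.2}

/-- `Triples(E0, E1)`. -/
def Triples (d : ℕ) (E0 E1 : ClusteringS d) : Set (Fin E0.1 × Pt d × Pt d) :=
  {q | 0 < qIHAT d E0 q.1 q.2.1 q.2.2 ∧ E1 = updC d E0 q.1 q.2.1 q.2.2}

/-- The first standard basis vector of `ℤ^d`. -/
def e1v (d : ℕ) : Pt d := fun i => if (i : ℕ) = 0 then 1 else 0

/-- Reference dimers and trimers. -/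
def Ref (d : ℕ) : Set (Finset (Pt d)) :=
  {A | ∃ x : Pt d, A = {x, x + e1v d} ∨ A = {x, x + e1v d, x + e1v d + e1v d}}

/-- *-adjacency in `ℤ^d`: distinct points differing by at most one in each coordinate. -/
def starAdj (d : ℕ) (x y : Pt d) : Prop := x ≠ y ∧ ∀ i, (x i - y i).natAbs ≤ 1

/-- The *-visible boundary of `A`. -/
def visBdry (d : ℕ) (A : Finset (Pt d)) : Set (Pt d) :=
  {x | (∃ y ∈ A, starAdj d x y) ∧
    ∃ γ : ℕ → Pt d, γ 0 = x ∧ (∀ t, latAdj d (γ t) (γ (t + 1))) ∧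
      (∀ t, γ t ∉ A) ∧ ∀ r : ℝ, ∃ t, r < dist0 d (γ t) 0}

/-- `A` is connected in the nearest-neighbor graph of `ℤ^d`. -/
def LatConnected (d : ℕ) (A : Finset (Pt d)) : Prop :=
  ∀ x ∈ A, ∀ y ∈ A, ∃ (L : ℕ) (γ : ℕ → Pt d), γ 0 = x ∧ γ L = y ∧
    (∀ t < L, latAdj d (γ t) (γ (t + 1))) ∧ ∀ t ≤ L, γ t ∈ A

/-- Strict lexicographic order on `ℤ^d`. -/
def lexLt (d : ℕ) (x y : Pt d) : Prop :=
  ∃ i : Fin d, (∀ j, j < i → x j = y j) ∧ x i < y i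

/-- `x` is the lex (least) element of `A`. -/
def IsLex (d : ℕ) (A : Finset (Pt d)) (x : Pt d) : Prop :=
  x ∈ A ∧ ∀ y ∈ A, y ≠ x → lexLt d x y

section DirsF
variable {d : ℕ}

/-- The directions as a `Finset`. -/
def dirsF (d : ℕ) : Finset (Pt d) :=
  Finset.image (fun p : Fin d × Bool => Pi.single p.1 (if p.2 then (1:ℤ) else -1))
    Finset.univ

lemma dirsF_inj : Function.Injective
    (fun p : Fin d × Bool => (Pi.single p.1 (if p.2 then (1:ℤ) else -1) : Pt d)) := by
  rintro ⟨i, b⟩ ⟨j, c⟩ h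
  simp only at h
  have hi := congrFun h i
  simp only [Pi.single_apply, if_pos rfl] at hi
  have hij : i = j := by
    by_contra hne
    rw [if_neg hne] at hi
    cases b <;> simp_all
  subst hij
  rw [if_pos rfl] at hi
  cases b <;> cases c <;> simp_all

lemma mem_dirsF {v : Pt d} : v ∈ dirsF d ↔ v ∈ Dir d := by
  simp only [dirsF, Finset.mem_image, Finset.mem_univ, true_and, Dir, Set.mem_setOf_eq]
  constructor
  · rintro ⟨⟨i, b⟩, rfl⟩
    exact ⟨i, by cases b <;> simp⟩
  · rintro ⟨i, h | h⟩
    · exact ⟨⟨i, true⟩, by simp [h]⟩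
    · exact ⟨⟨i, false⟩, by simp [h]⟩

lemma card_dirsF : (dirsF d).card = 2 * d := by
  rw [dirsF, Finset.card_image_of_injective _ dirsF_inj, Finset.card_univ]
  simp [Fintype.card_prod, Nat.mul_comm]

lemma sum_dirsF {M : Type*} [AddCommMonoid M] (f : Pt d → M) :
    ∑ e ∈ dirsF d, f e = ∑ i : Fin d, (f (Pi.single i 1) + f (Pi.single i (-1))) := by
  rw [dirsF, Finset.sum_image (fun a _ b _ h => dirsF_inj h)]
  rw [Fintype.sum_prod_type]
  refine Finset.sum_congr rfl fun i _ => ?_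
  simp [Fintype.sum_bool]

lemma sum_dirsF_apply (i : Fin d) : ∑ e ∈ dirsF d, e i = 0 := by
  rw [sum_dirsF (fun e => e i)]
  refine Finset.sum_eq_zero fun j _ => ?_
  simp [Pi.single_apply]
  split <;> ring

lemma dirsF_apply_abs {e : Pt d} (he : e ∈ dirsF d) (i : Fin d) :
    e i = 1 ∨ e i = -1 ∨ e i = 0 := by
  rw [mem_dirsF] at he
  obtain ⟨j, h | h⟩ := he <;> subst h <;> simp only [Pi.single_apply] <;>
    rcases eq_or_ne i j with hij | hij <;> simp [hij]

lemma single_neg_mem_dirsF (i : Fin d) : Pi.single i (-1 : ℤ) ∈ dirsF d :=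
  mem_dirsF.2 ⟨i, Or.inr rfl⟩

lemma single_pos_mem_dirsF (i : Fin d) : Pi.single i (1 : ℤ) ∈ dirsF d :=
  mem_dirsF.2 ⟨i, Or.inl rfl⟩

end DirsF


section ProbAPI
variable {d : ℕ}

lemma prob_eq_card (T : ℕ) (P : (Fin T → Pt d) → Prop) [DecidablePred P] :
    prob d T P =
      (((Fintype.piFinset fun _ : Fin T => dirsF d).filter P).card : ℝ) /
        ((2 * d : ℕ) : ℝ) ^ T := by
  unfold prob
  congr 2
  rw [← Fintype.card_coe (((Fintype.piFinset fun _ : Fin T => dirsF d).filter P)),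
    ← Nat.card_eq_fintype_card]
  refine Nat.card_congr (Equiv.subtypeEquivRight fun s => ?_).symm
  simp [Fintype.mem_piFinset, mem_dirsF]

lemma prob_nonneg {T : ℕ} {P : (Fin T → Pt d) → Prop} : 0 ≤ prob d T P := by
  unfold prob
  positivity

lemma prob_congr {T : ℕ} {P Q : (Fin T → Pt d) → Prop} (h : ∀ s, P s ↔ Q s) :
    prob d T P = prob d T Q := by
  unfold prob
  congr 2
  rw [Nat.card_congr (Equiv.subtypeEquivRight fun s =>
    and_congr_right fun _ => h s)]

lemma prob_false {T : ℕ} : prob d T (fun _ : Fin T → Pt d => False) = 0 := by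
  unfold prob
  haveI : IsEmpty {s : Fin T → Pt d // (∀ i, s i ∈ Dir d) ∧ False} := ⟨fun s => s.2.2⟩
  rw [Nat.card_of_isEmpty]
  simp

lemma prob_zero_true {P : (Fin 0 → Pt d) → Prop} (h : ∀ s, P s) :
    prob d 0 P = 1 := by
  unfold prob
  rw [show Nat.card {s : Fin 0 → Pt d // (∀ i, s i ∈ Dir d) ∧ P s} = 1 from ?_]
  · simp
  · haveI : Unique {s : Fin 0 → Pt d // (∀ i, s i ∈ Dir d) ∧ P s} :=
      { default := ⟨fun i => i.elim0, fun i => i.elim0, h _⟩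
        uniq := fun s => Subtype.ext (funext fun i => i.elim0) }
    exact Nat.card_unique

lemma card_filter_succ (T : ℕ) (P : (Fin (T+1) → Pt d) → Prop) [DecidablePred P] :
    ((Fintype.piFinset fun _ : Fin (T+1) => dirsF d).filter P).card
      = ∑ e ∈ dirsF d,
        ((Fintype.piFinset fun _ : Fin T => dirsF d).filter
          (fun s' => P (Fin.cons e s'))).card := by
  classical
  rw [Finset.card_eq_sum_card_fiberwise
    (f := fun s : Fin (T+1) → Pt d => s 0) (t := dirsF d)
    (fun s hs => by
      rw [Finset.mem_coe, Finset.mem_filter, Fintype.mem_piFinset] at hs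
      exact hs.1 0)]
  refine Finset.sum_congr rfl fun e he => ?_
  refine Finset.card_bij' (fun s _ => Fin.tail s) (fun s' _ => Fin.cons e s')
    ?_ ?_ ?_ ?_
  · intro s hs
    rw [Finset.mem_filter, Finset.mem_filter, Fintype.mem_piFinset] at hs
    obtain ⟨⟨hmem, hP⟩, h0⟩ := hs
    rw [Finset.mem_filter, Fintype.mem_piFinset]
    have hc : Fin.cons e (Fin.tail s) = s := by
      rw [← h0]; exact Fin.cons_self_tail s
    exact ⟨fun i => hmem i.succ, by rw [hc]; exact hP⟩
  · intro s' hs'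
    rw [Finset.mem_filter, Fintype.mem_piFinset] at hs'
    rw [Finset.mem_filter, Finset.mem_filter, Fintype.mem_piFinset]
    refine ⟨⟨fun i => ?_, hs'.2⟩, by simp⟩
    induction i using Fin.cases with
    | zero => simpa using he
    | succ j => simpa using hs'.1 j
  · intro s hs
    rw [Finset.mem_filter, Finset.mem_filter] at hs
    show Fin.cons e (Fin.tail s) = s
    rw [← hs.2]; exact Fin.cons_self_tail s
  · intro s' _
    funext i
    simp [Fin.tail]

lemma prob_succ (T : ℕ) (P : (Fin (T+1) → Pt d) → Prop) :
    prob d (T+1) P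
      = ((2 * d : ℕ) : ℝ)⁻¹ * ∑ e ∈ dirsF d, prob d T (fun s' => P (Fin.cons e s')) := by
  classical
  rw [prob_eq_card, card_filter_succ, Finset.mul_sum, Nat.cast_sum, Finset.sum_div]
  refine Finset.sum_congr rfl fun e _ => ?_
  rw [prob_eq_card, pow_succ, div_mul_eq_div_div, div_eq_inv_mul]

end ProbAPI

section WalkF
variable {d : ℕ}

/-- Finite-horizon avoidance probability, defined by recursion. -/
noncomputable def walkF (d : ℕ) (W : Finset (Pt d)) : ℕ → Pt d → ℝ
  | 0, _ => 1
  | (T+1), y => ((2 * d : ℕ) : ℝ)⁻¹ *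
      ∑ e ∈ dirsF d, (if y + e ∈ W then 0 else walkF d W T (y + e))

lemma wpos_zero (x : Pt d) {T : ℕ} (s : Fin T → Pt d) : wpos d x s 0 = x := by
  unfold wpos
  rw [Finset.filter_false_of_mem (fun i _ => by omega), Finset.sum_empty, add_zero]

lemma wpos_cons (x e : Pt d) {T : ℕ} (s' : Fin T → Pt d) (t : ℕ) :
    wpos d x (Fin.cons e s') (t+1) = wpos d (x + e) s' t := by
  unfold wpos
  rw [add_assoc]
  congr 1
  rw [Finset.sum_filter, Finset.sum_filter, Fin.sum_univ_succ]
  simp only [Fin.val_zero, Nat.zero_lt_succ, if_true, Fin.cons_zero, Fin.cons_succ,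
    Fin.val_succ]
  congr 1
  refine Finset.sum_congr rfl fun i _ => ?_
  congr 1
  simp [Nat.succ_lt_succ_iff]

lemma prob_avoid (W : Finset (Pt d)) :
    ∀ (T : ℕ) (x : Pt d),
      prob d T (fun s => ∀ t, 1 ≤ t → t ≤ T → wpos d x s t ∉ (W : Set (Pt d)))
        = walkF d W T x := by
  intro T
  induction T with
  | zero =>
    intro x
    rw [prob_zero_true (fun s t h1 h2 => absurd (h1.trans h2) (by omega))]
    rfl
  | succ T ih =>
    intro x
    rw [prob_succ, walkF]
    congr 1
    refine Finset.sum_congr rfl fun e _ => ?_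
    by_cases hW : x + e ∈ W
    · rw [if_pos hW, ← prob_false (d := d) (T := T)]
      refine prob_congr fun s' => iff_false_intro ?_
      intro hall
      have h1 := hall 1 le_rfl (by omega)
      have h2 : wpos d x (Fin.cons e s') 1 = x + e := by
        have := wpos_cons x e s' 0
        rw [wpos_zero] at this
        simpa using this
      rw [h2] at h1
      exact h1 (by simpa using hW)
    · rw [if_neg hW, ← ih (x + e)]
      refine prob_congr fun s' => ?_
      constructor
      · intro hall t h1 h2
        have := hall (t+1) (by omega) (by omega)
        rwa [wpos_cons] at this
      · intro hall t h1 h2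
        rcases Nat.exists_eq_add_of_le h1 with ⟨t', rfl⟩
        rw [Nat.add_comm 1 t', wpos_cons]
        rcases Nat.eq_zero_or_pos t' with rfl | ht'
        · rw [wpos_zero]; simpa using hW
        · exact hall t' ht' (by omega)

lemma walkF_nonneg (W : Finset (Pt d)) : ∀ T y, 0 ≤ walkF d W T y := by
  intro T
  induction T with
  | zero => intro y; rw [walkF]; norm_num
  | succ T ih =>
    intro y
    rw [walkF]
    refine mul_nonneg (by positivity) (Finset.sum_nonneg fun e _ => ?_)
    split
    · rfl
    · exact ih _

lemma walkF_le_one (hd : 0 < d) (W : Finset (Pt d)) : ∀ T y, walkF d W T y ≤ 1 := by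
  intro T
  induction T with
  | zero => intro y; rw [walkF]
  | succ T ih =>
    intro y
    rw [walkF]
    have h2d : (0:ℝ) < ((2 * d : ℕ) : ℝ) := by positivity
    rw [inv_mul_le_iff₀ h2d, mul_one]
    calc ∑ e ∈ dirsF d, (if y + e ∈ W then (0:ℝ) else walkF d W T (y + e))
        ≤ ∑ e ∈ dirsF d, 1 := by
          refine Finset.sum_le_sum fun e _ => ?_
          split
          · norm_num
          · exact ih _
      _ = ((2 * d : ℕ) : ℝ) := by rw [Finset.sum_const, card_dirsF]; simp

lemma walkF_succ_le (hd : 0 < d) (W : Finset (Pt d)) :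
    ∀ T y, walkF d W (T+1) y ≤ walkF d W T y := by
  intro T
  induction T with
  | zero => intro y; exact walkF_le_one hd W 1 y
  | succ T ih =>
    intro y
    rw [walkF, walkF]
    refine mul_le_mul_of_nonneg_left (Finset.sum_le_sum fun e _ => ?_) (by positivity)
    split
    · rfl
    · exact ih _

lemma walkF_anti (hd : 0 < d) (W : Finset (Pt d)) {T T' : ℕ} (h : T ≤ T') (y : Pt d) :
    walkF d W T' y ≤ walkF d W T y := by
  induction T' with
  | zero => rw [Nat.le_zero.mp h]
  | succ T' ih =>
    rcases Nat.lt_or_ge T (T'+1) with hlt | hge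
    · exact (walkF_succ_le hd W T' y).trans (ih (by omega))
    · rw [Nat.le_antisymm h hge]

/-- union bound: complementary avoidance prob is bounded by sum over singletons. -/
lemma one_sub_walkF_le (hd : 0 < d) (W : Finset (Pt d)) :
    ∀ T y, 1 - walkF d W T y ≤ ∑ w ∈ W, (1 - walkF d {w} T y) := by
  intro T
  induction T with
  | zero =>
    intro y
    rw [walkF]
    simp [walkF]
  | succ T ih =>
    intro y
    have h2d : (0:ℝ) < ((2 * d : ℕ) : ℝ) := by positivity
    have key : ∀ (V : Finset (Pt d)),
        1 - walkF d V (T+1) y = ((2 * d : ℕ) : ℝ)⁻¹ *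
          ∑ e ∈ dirsF d, (1 - (if y + e ∈ V then 0 else walkF d V T (y + e))) := by
      intro V
      rw [Finset.sum_sub_distrib, Finset.sum_const, card_dirsF, mul_sub, walkF]
      congr 1
      rw [nsmul_eq_mul, mul_one, inv_mul_cancel₀ h2d.ne']
    rw [key]
    have step : ∀ e ∈ dirsF d,
        (1 - (if y + e ∈ W then (0:ℝ) else walkF d W T (y + e)))
          ≤ ∑ w ∈ W, (1 - (if y + e ∈ ({w} : Finset (Pt d)) then (0:ℝ)
              else walkF d {w} T (y + e))) := by
      intro e _
      by_cases hW : y + e ∈ W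
      · rw [if_pos hW]
        have hnn : ∀ w ∈ W, (0:ℝ) ≤ 1 - (if y + e ∈ ({w} : Finset (Pt d)) then (0:ℝ)
            else walkF d {w} T (y + e)) := by
          intro w _
          have : (if y + e ∈ ({w} : Finset (Pt d)) then (0:ℝ)
              else walkF d {w} T (y + e)) ≤ 1 := by
            split
            · norm_num
            · exact walkF_le_one hd _ _ _
          linarith
        have hone : (1:ℝ) - (if y + e ∈ ({y + e} : Finset (Pt d)) then (0:ℝ)
            else walkF d {y + e} T (y + e)) = 1 := by simp
        have := Finset.single_le_sum hnn hW
        rw [hone] at this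
        linarith
      · rw [if_neg hW]
        calc 1 - walkF d W T (y + e) ≤ ∑ w ∈ W, (1 - walkF d {w} T (y + e)) := ih _
          _ = _ := by
            refine Finset.sum_congr rfl fun w hw => ?_
            rw [if_neg (by simp; rintro rfl; exact hW hw)]
    calc ((2 * d : ℕ) : ℝ)⁻¹ *
          ∑ e ∈ dirsF d, (1 - (if y + e ∈ W then (0:ℝ) else walkF d W T (y + e)))
        ≤ ((2 * d : ℕ) : ℝ)⁻¹ * ∑ e ∈ dirsF d, ∑ w ∈ W,
            (1 - (if y + e ∈ ({w} : Finset (Pt d)) then (0:ℝ)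
              else walkF d {w} T (y + e))) := by
          exact mul_le_mul_of_nonneg_left (Finset.sum_le_sum step) (by positivity)
      _ = ∑ w ∈ W, (1 - walkF d {w} (T+1) y) := by
          rw [Finset.sum_comm, Finset.mul_sum]
          exact Finset.sum_congr rfl fun w _ => (key {w}).symm

end WalkF

section Phi
variable {d : ℕ}

def qZ {d : ℕ} (v : Pt d) : ℤ := ∑ i, (v i)^2

lemma qZ_nonneg (v : Pt d) : 0 ≤ qZ v :=
  Finset.sum_nonneg fun i _ => sq_nonneg _

lemma qZ_zero : qZ (0 : Pt d) = 0 := by simp [qZ]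

lemma sq_le_qZ (v : Pt d) (i : Fin d) : (v i)^2 ≤ qZ v :=
  Finset.single_le_sum (f := fun j => (v j)^2) (fun j _ => sq_nonneg _) (Finset.mem_univ i)

lemma qZ_pos {v : Pt d} (hv : v ≠ 0) : 0 < qZ v := by
  obtain ⟨i, hi⟩ := Function.ne_iff.mp hv
  have hvi : v i ≠ 0 := by simpa using hi
  have h1 : (1:ℤ) ≤ (v i)^2 := by
    rcases hvi.lt_or_gt with h | h <;> nlinarith
  exact lt_of_lt_of_le one_pos (h1.trans (sq_le_qZ v i))

lemma qZ_ne_zero_iff {v : Pt d} : v ≠ 0 ↔ qZ v ≠ 0 := by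
  constructor
  · exact fun h => (qZ_pos h).ne'
  · intro h hv
    rw [hv, qZ_zero] at h
    exact h rfl

lemma qZ_add_single (v : Pt d) (i : Fin d) (ε : ℤ) :
    qZ (v + Pi.single i ε) = qZ v + 2 * ε * v i + ε^2 := by
  unfold qZ
  have h1 : ∀ j : Fin d, ((v + Pi.single i ε : Pt d) j)^2
      = (v j)^2 + (2 * (v j * (Pi.single i ε : Pt d) j) + ((Pi.single i ε : Pt d) j)^2) := by
    intro j
    rw [Pi.add_apply]
    ring
  rw [Finset.sum_congr rfl fun j _ => h1 j, Finset.sum_add_distrib, Finset.sum_add_distrib]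
  have h2 : ∑ j, 2 * (v j * (Pi.single i ε : Pt d) j) = 2 * ε * v i := by
    rw [Finset.sum_eq_single i]
    · simp
      ring
    · intro j _ hj
      simp [Pi.single_apply, hj]
    · intro h
      exact absurd (Finset.mem_univ i) h
  have h3 : ∑ j, ((Pi.single i ε : Pt d) j)^2 = ε^2 := by
    rw [Finset.sum_eq_single i]
    · simp
    · intro j _ hj
      simp [Pi.single_apply, hj]
    · intro h
      exact absurd (Finset.mem_univ i) h
  rw [h2, h3]
  ring

noncomputable def phi {d : ℕ} (v : Pt d) : ℝ :=
  if v = 0 then 1 else min 1 (36 / ((qZ v : ℤ) : ℝ))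

lemma phi_zero : phi (0 : Pt d) = 1 := by simp [phi]

lemma phi_nonneg (v : Pt d) : 0 ≤ phi v := by
  unfold phi
  split
  · norm_num
  · refine le_min (by norm_num) ?_
    have := qZ_nonneg v
    positivity

lemma phi_le_one (v : Pt d) : phi v ≤ 1 := by
  unfold phi
  split
  · rfl
  · exact min_le_left _ _

lemma phi_le {v : Pt d} (hv : v ≠ 0) : phi v ≤ 36 / ((qZ v : ℤ) : ℝ) := by
  rw [phi, if_neg hv]
  exact min_le_right _ _

lemma key_ineq {a q : ℝ} (hq : 37 ≤ q) (ha : a^2 ≤ q) :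
    36/(q+1+2*a) + 36/(q+1-2*a)
      ≤ 72/(q+1) + 288*a^2/(q+1)^3 + 2304*a^4/(q+1)^5 := by
  have hQ : (0:ℝ) < q+1 := by linarith
  have h8 : 8*a^2 ≤ (q+1)^2 := by nlinarith
  have h1 : 0 < q+1+2*a := by nlinarith
  have h2 : 0 < q+1-2*a := by nlinarith
  have hL : 36/(q+1+2*a) + 36/(q+1-2*a) = 72*(q+1)/((q+1+2*a)*(q+1-2*a)) := by
    field_simp
    ring
  have hR : 72/(q+1) + 288*a^2/(q+1)^3 + 2304*a^4/(q+1)^5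
      = (72*(q+1)^4 + 288*a^2*(q+1)^2 + 2304*a^4)/(q+1)^5 := by
    field_simp
  rw [hL, hR]
  rw [div_le_div_iff₀ (by positivity) (by positivity)]
  nlinarith [mul_le_mul_of_nonneg_left h8 (by positivity : (0:ℝ) ≤ 1152*a^4),
    sq_nonneg a, sq_nonneg (a*a), pow_pos hQ 4]

lemma key_total {q : ℝ} (hd5 : 5 ≤ d) (hq : 37 ≤ q) :
    72*(d:ℝ)/(q+1) + 288*q/(q+1)^3 + 2304*q^2/(q+1)^5 ≤ 2*(d:ℝ)*(36/q) := by
  have hd5' : (5:ℝ) ≤ (d:ℝ) := by exact_mod_cast hd5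
  have hQ : (0:ℝ) < q+1 := by linarith
  have hq0 : (0:ℝ) < q := by linarith
  have hL : 72*(d:ℝ)/(q+1) + 288*q/(q+1)^3 + 2304*q^2/(q+1)^5
      = (72*(d:ℝ)*(q+1)^4 + 288*q*(q+1)^2 + 2304*q^2)/(q+1)^5 := by
    field_simp
  have hR : 2*(d:ℝ)*(36/q) = 72*(d:ℝ)/q := by ring
  rw [hL, hR, div_le_div_iff₀ (by positivity) hq0]
  have e1 : 288*q^2*(q+1)^2 ≤ 288*(q+1)^4 := by nlinarith
  have e2 : 2304*q^3 ≤ 2304*(q+1)^3 := by nlinarith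
  have e3 : 38*(q+1)^3 ≤ (q+1)^4 := by nlinarith
  nlinarith [pow_pos hQ 3, pow_pos hQ 4]

lemma phi_pair_bound {v : Pt d} (hq37 : (37:ℤ) ≤ qZ v) (i : Fin d) :
    phi (v + Pi.single i 1) + phi (v + Pi.single i (-1))
      ≤ 72/(((qZ v : ℤ):ℝ)+1) + 288*((v i : ℤ):ℝ)^2/(((qZ v : ℤ):ℝ)+1)^3
        + 2304*((v i : ℤ):ℝ)^4/(((qZ v : ℤ):ℝ)+1)^5 := by
  have hq37R : (37:ℝ) ≤ ((qZ v : ℤ):ℝ) := by exact_mod_cast hq37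
  have ha2 : ((v i : ℤ):ℝ)^2 ≤ ((qZ v : ℤ):ℝ) := by exact_mod_cast sq_le_qZ v i
  have hq1' : qZ (v + Pi.single i 1) = qZ v + 2 * v i + 1 := by
    rw [qZ_add_single]; ring
  have hq2' : qZ (v + Pi.single i (-1)) = qZ v - 2 * v i + 1 := by
    rw [qZ_add_single]; ring
  have hsq := sq_le_qZ v i
  have hne1 : v + Pi.single i 1 ≠ 0 := by
    rw [qZ_ne_zero_iff, hq1']
    intro h
    nlinarith
  have hne2 : v + Pi.single i (-1) ≠ 0 := by
    rw [qZ_ne_zero_iff, hq2']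
    intro h
    nlinarith
  have hb1 : phi (v + Pi.single i 1) ≤ 36/(((qZ v : ℤ):ℝ)+1+2*((v i : ℤ):ℝ)) := by
    refine (phi_le hne1).trans_eq ?_
    rw [hq1']
    congr 1
    push_cast
    ring
  have hb2 : phi (v + Pi.single i (-1)) ≤ 36/(((qZ v : ℤ):ℝ)+1-2*((v i : ℤ):ℝ)) := by
    refine (phi_le hne2).trans_eq ?_
    rw [hq2']
    congr 1
    push_cast
    ring
  calc phi (v + Pi.single i 1) + phi (v + Pi.single i (-1))
      ≤ 36/(((qZ v : ℤ):ℝ)+1+2*((v i : ℤ):ℝ)) + 36/(((qZ v : ℤ):ℝ)+1-2*((v i : ℤ):ℝ)) :=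
        add_le_add hb1 hb2
    _ ≤ _ := key_ineq hq37R ha2

lemma phi_superharm (hd5 : 5 ≤ d) {v : Pt d} (hv : v ≠ 0) :
    ((2 * d : ℕ) : ℝ)⁻¹ * ∑ e ∈ dirsF d, phi (v + e) ≤ phi v := by
  have hd0 : 0 < d := by omega
  have h2d : (0:ℝ) < ((2 * d : ℕ) : ℝ) := by positivity
  have hq1 : (1:ℤ) ≤ qZ v := qZ_pos hv
  by_cases hsmall : qZ v ≤ 36
  · have hphi : phi v = 1 := by
      rw [phi, if_neg hv]
      refine min_eq_left ?_
      rw [le_div_iff₀ (by exact_mod_cast qZ_pos hv), one_mul]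
      exact_mod_cast hsmall
    rw [hphi, inv_mul_le_iff₀ h2d, mul_one]
    calc ∑ e ∈ dirsF d, phi (v + e) ≤ ∑ e ∈ dirsF d, 1 :=
          Finset.sum_le_sum fun e _ => phi_le_one _
      _ = ((2 * d : ℕ) : ℝ) := by rw [Finset.sum_const, card_dirsF, nsmul_eq_mul, mul_one]
  · push_neg at hsmall
    have hq37 : (37:ℤ) ≤ qZ v := hsmall
    have hq37R : (37:ℝ) ≤ ((qZ v : ℤ):ℝ) := by exact_mod_cast hq37
    have hphi : phi v = 36 / ((qZ v : ℤ):ℝ) := by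
      rw [phi, if_neg hv]
      refine min_eq_right ?_
      rw [div_le_one (by linarith)]
      linarith
    rw [hphi, inv_mul_le_iff₀ h2d]
    have hsum2 : ∑ i : Fin d, ((v i : ℤ):ℝ)^2 = ((qZ v : ℤ):ℝ) := by
      unfold qZ
      push_cast
      rfl
    have hsum4 : ∑ i : Fin d, ((v i : ℤ):ℝ)^4 ≤ ((qZ v : ℤ):ℝ)^2 := by
      have hstep : ∀ i : Fin d, ((v i : ℤ):ℝ)^4 ≤ ((v i : ℤ):ℝ)^2 * ((qZ v : ℤ):ℝ) := by
        intro i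
        have h1 : ((v i : ℤ):ℝ)^2 ≤ ((qZ v : ℤ):ℝ) := by exact_mod_cast sq_le_qZ v i
        nlinarith [sq_nonneg ((v i : ℤ):ℝ)]
      calc ∑ i : Fin d, ((v i : ℤ):ℝ)^4
          ≤ ∑ i : Fin d, ((v i : ℤ):ℝ)^2 * ((qZ v : ℤ):ℝ) :=
            Finset.sum_le_sum fun i _ => hstep i
        _ = (∑ i : Fin d, ((v i : ℤ):ℝ)^2) * ((qZ v : ℤ):ℝ) := by rw [Finset.sum_mul]
        _ = ((qZ v : ℤ):ℝ)^2 := by rw [hsum2]; ring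
    calc ∑ e ∈ dirsF d, phi (v + e)
        = ∑ i : Fin d, (phi (v + Pi.single i 1) + phi (v + Pi.single i (-1))) :=
          sum_dirsF _
      _ ≤ ∑ i : Fin d, (72/(((qZ v : ℤ):ℝ)+1) + 288*((v i : ℤ):ℝ)^2/(((qZ v : ℤ):ℝ)+1)^3
            + 2304*((v i : ℤ):ℝ)^4/(((qZ v : ℤ):ℝ)+1)^5) :=
          Finset.sum_le_sum fun i _ => phi_pair_bound hq37 i
      _ = 72*(d:ℝ)/(((qZ v : ℤ):ℝ)+1) + 288*((qZ v : ℤ):ℝ)/(((qZ v : ℤ):ℝ)+1)^3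
            + 2304*(∑ i : Fin d, ((v i : ℤ):ℝ)^4)/(((qZ v : ℤ):ℝ)+1)^5 := by
          rw [Finset.sum_add_distrib, Finset.sum_add_distrib, Finset.sum_const,
            Finset.card_univ, Fintype.card_fin]
          rw [← Finset.sum_div, ← Finset.sum_div, ← Finset.mul_sum, ← Finset.mul_sum, hsum2]
          push_cast
          ring
      _ ≤ 72*(d:ℝ)/(((qZ v : ℤ):ℝ)+1) + 288*((qZ v : ℤ):ℝ)/(((qZ v : ℤ):ℝ)+1)^3
            + 2304*((qZ v : ℤ):ℝ)^2/(((qZ v : ℤ):ℝ)+1)^5 := by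
          have hQ : (0:ℝ) < ((qZ v : ℤ):ℝ) + 1 := by linarith
          gcongr
      _ ≤ 2*(d:ℝ)*(36/((qZ v : ℤ):ℝ)) := key_total hd5 hq37R
      _ = ((2*d:ℕ):ℝ) * (36/((qZ v : ℤ):ℝ)) := by push_cast; ring

end Phi

section HitBound
variable {d : ℕ}

lemma one_sub_walkF_succ (hd : 0 < d) (V : Finset (Pt d)) (T : ℕ) (y : Pt d) :
    1 - walkF d V (T+1) y = ((2 * d : ℕ) : ℝ)⁻¹ *
      ∑ e ∈ dirsF d, (1 - (if y + e ∈ V then 0 else walkF d V T (y + e))) := by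
  have h2d : (0:ℝ) < ((2 * d : ℕ) : ℝ) := by positivity
  rw [Finset.sum_sub_distrib, Finset.sum_const, card_dirsF, mul_sub, walkF]
  congr 1
  rw [nsmul_eq_mul, mul_one, inv_mul_cancel₀ h2d.ne']

lemma one_sub_single_le_phi (hd5 : 5 ≤ d) (w : Pt d) :
    ∀ (T : ℕ) (y : Pt d), y ≠ w → 1 - walkF d {w} T y ≤ phi (y - w) := by
  have hd0 : 0 < d := by omega
  intro T
  induction T with
  | zero =>
    intro y hy
    rw [walkF]
    simpa using phi_nonneg (y - w)
  | succ T ih =>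
    intro y hy
    rw [one_sub_walkF_succ hd0]
    have hstep : ∀ e ∈ dirsF d,
        1 - (if y + e ∈ ({w} : Finset (Pt d)) then (0:ℝ) else walkF d {w} T (y + e))
          ≤ phi ((y - w) + e) := by
      intro e _
      by_cases he : y + e = w
      · rw [if_pos (by simpa using he)]
        have : (y - w) + e = 0 := by
          rw [← he]; abel
        rw [this, phi_zero]
        norm_num
      · rw [if_neg (by simpa using he)]
        have : (y - w) + e = (y + e) - w := by abel
        rw [this]
        exact ih (y + e) he
    calc ((2 * d : ℕ) : ℝ)⁻¹ * ∑ e ∈ dirsF d,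
          (1 - (if y + e ∈ ({w} : Finset (Pt d)) then (0:ℝ) else walkF d {w} T (y + e)))
        ≤ ((2 * d : ℕ) : ℝ)⁻¹ * ∑ e ∈ dirsF d, phi ((y - w) + e) := by
          refine mul_le_mul_of_nonneg_left (Finset.sum_le_sum hstep) (by positivity)
      _ ≤ phi (y - w) := phi_superharm hd5 (sub_ne_zero.mpr hy)

lemma walkF_ge_one_sub_sum_phi (hd5 : 5 ≤ d) (W : Finset (Pt d)) (T : ℕ) {y : Pt d}
    (hy : y ∉ W) : 1 - ∑ w ∈ W, phi (y - w) ≤ walkF d W T y := by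
  have hd0 : 0 < d := by omega
  have h1 : 1 - walkF d W T y ≤ ∑ w ∈ W, (1 - walkF d {w} T y) :=
    one_sub_walkF_le hd0 W T y
  have h2 : ∑ w ∈ W, (1 - walkF d {w} T y) ≤ ∑ w ∈ W, phi (y - w) :=
    Finset.sum_le_sum fun w hw =>
      one_sub_single_le_phi hd5 w T y (fun h => hy (h ▸ hw))
  linarith

end HitBound
section StripR
variable {d : ℕ}

/-- survival probability (upper bound recursion) in the strip `1 ≤ x i0 - y i0 ≤ K - 1`. -/
noncomputable def stripR (d : ℕ) (c : ℤ) (K : ℕ) (i0 : Fin d) : ℕ → Pt d → ℝ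
  | 0, y => if 1 ≤ c - y i0 ∧ c - y i0 ≤ (K:ℤ) - 1 then 1 else 0
  | (t+1), y => if 1 ≤ c - y i0 ∧ c - y i0 ≤ (K:ℤ) - 1 then
      ((2 * d : ℕ) : ℝ)⁻¹ * ∑ e ∈ dirsF d, stripR d c K i0 t (y + e) else 0

variable {c : ℤ} {K : ℕ} {i0 : Fin d}

lemma stripR_nonneg : ∀ t y, 0 ≤ stripR d c K i0 t y := by
  intro t
  induction t with
  | zero =>
    intro y
    rw [stripR]
    split <;> norm_num
  | succ t ih =>
    intro y
    rw [stripR]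
    split
    · exact mul_nonneg (by positivity) (Finset.sum_nonneg fun e _ => ih _)
    · rfl

lemma stripR_le_one (hd : 0 < d) : ∀ t y, stripR d c K i0 t y ≤ 1 := by
  intro t
  induction t with
  | zero =>
    intro y
    rw [stripR]
    split <;> norm_num
  | succ t ih =>
    intro y
    rw [stripR]
    split
    · have h2d : (0:ℝ) < ((2 * d : ℕ) : ℝ) := by positivity
      rw [inv_mul_le_iff₀ h2d, mul_one]
      calc ∑ e ∈ dirsF d, stripR d c K i0 t (y + e) ≤ ∑ e ∈ dirsF d, 1 :=
            Finset.sum_le_sum fun e _ => ih _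
        _ = ((2 * d : ℕ) : ℝ) := by rw [Finset.sum_const, card_dirsF, nsmul_eq_mul, mul_one]
    · norm_num

lemma stripR_boundary {t : ℕ} {y : Pt d} (h : ¬(1 ≤ c - y i0 ∧ c - y i0 ≤ (K:ℤ) - 1)) :
    stripR d c K i0 t y = 0 := by
  cases t <;> rw [stripR] <;> rw [if_neg h]

lemma stripR_succ_interior {t : ℕ} {y : Pt d} (h : 1 ≤ c - y i0 ∧ c - y i0 ≤ (K:ℤ) - 1) :
    stripR d c K i0 (t+1) y
      = ((2 * d : ℕ) : ℝ)⁻¹ * ∑ e ∈ dirsF d, stripR d c K i0 t (y + e) := by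
  rw [stripR, if_pos h]

lemma stripR_exit (hd : 0 < d) : ∀ (t : ℕ) (y : Pt d), (c - y i0).toNat ≤ t →
    stripR d c K i0 t y ≤ 1 - ((2 * d : ℕ) : ℝ)⁻¹ ^ (c - y i0).toNat := by
  have h2d : (0:ℝ) < ((2 * d : ℕ) : ℝ) := by positivity
  have hinv1 : ((2 * d : ℕ) : ℝ)⁻¹ ≤ 1 := by
    rw [inv_le_one_iff₀]
    right
    exact_mod_cast Nat.one_le_iff_ne_zero.mpr (by omega)
  intro t
  induction t with
  | zero =>
    intro y h
    have h0 : (c - y i0).toNat = 0 := Nat.le_zero.mp h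
    rw [h0, pow_zero]
    have : ¬(1 ≤ c - y i0 ∧ c - y i0 ≤ (K:ℤ) - 1) := by
      rintro ⟨h1, -⟩
      omega
    rw [stripR_boundary this]
    norm_num
  | succ t ih =>
    intro y h
    by_cases hint : 1 ≤ c - y i0 ∧ c - y i0 ≤ (K:ℤ) - 1
    · rw [stripR_succ_interior hint]
      set k : ℕ := (c - y i0).toNat with hk
      have hk1 : 1 ≤ k := by omega
      have hup : Pi.single i0 (1:ℤ) ∈ dirsF d := single_pos_mem_dirsF i0
      have hdepup : (c - (y + Pi.single i0 (1:ℤ) : Pt d) i0).toNat = k - 1 := by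
        rw [Pi.add_apply, Pi.single_eq_same]
        omega
      have hbound : stripR d c K i0 t (y + Pi.single i0 (1:ℤ))
          ≤ 1 - ((2 * d : ℕ) : ℝ)⁻¹ ^ (k - 1) := by
        have := ih (y + Pi.single i0 (1:ℤ)) (by omega)
        rwa [hdepup] at this
      have hsplit : ∑ e ∈ dirsF d, stripR d c K i0 t (y + e)
          = stripR d c K i0 t (y + Pi.single i0 (1:ℤ))
            + ∑ e ∈ (dirsF d).erase (Pi.single i0 (1:ℤ)), stripR d c K i0 t (y + e) :=
        (Finset.add_sum_erase _ _ hup).symm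
      have hrest : ∑ e ∈ (dirsF d).erase (Pi.single i0 (1:ℤ)), stripR d c K i0 t (y + e)
          ≤ ((2 * d : ℕ) : ℝ) - 1 := by
        calc ∑ e ∈ (dirsF d).erase (Pi.single i0 (1:ℤ)), stripR d c K i0 t (y + e)
            ≤ ∑ e ∈ (dirsF d).erase (Pi.single i0 (1:ℤ)), 1 :=
              Finset.sum_le_sum fun e _ => stripR_le_one hd _ _
          _ = (((dirsF d).erase (Pi.single i0 (1:ℤ))).card : ℝ) := by
              rw [Finset.sum_const, nsmul_eq_mul, mul_one]
          _ = ((2 * d : ℕ) : ℝ) - 1 := by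
              rw [Finset.card_erase_of_mem hup, card_dirsF]
              have : 1 ≤ 2 * d := by omega
              push_cast [this]
              ring
      have hkk : ((2 * d : ℕ) : ℝ)⁻¹ ^ k
          = ((2 * d : ℕ) : ℝ)⁻¹ ^ (k - 1) * ((2 * d : ℕ) : ℝ)⁻¹ := by
        rw [← pow_succ]
        congr 1
        omega
      calc ((2 * d : ℕ) : ℝ)⁻¹ * ∑ e ∈ dirsF d, stripR d c K i0 t (y + e)
          ≤ ((2 * d : ℕ) : ℝ)⁻¹ *
              ((1 - ((2 * d : ℕ) : ℝ)⁻¹ ^ (k - 1)) + (((2 * d : ℕ) : ℝ) - 1)) := by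
            refine mul_le_mul_of_nonneg_left ?_ (by positivity)
            rw [hsplit]
            exact add_le_add hbound hrest
        _ = 1 - ((2 * d : ℕ) : ℝ)⁻¹ ^ (k - 1) * ((2 * d : ℕ) : ℝ)⁻¹ := by
            field_simp
            ring
        _ = 1 - ((2 * d : ℕ) : ℝ)⁻¹ ^ k := by rw [hkk]
    · rw [stripR_boundary hint]
      have : ((2 * d : ℕ) : ℝ)⁻¹ ^ (c - y i0).toNat ≤ 1 :=
        pow_le_one₀ (by positivity) hinv1
      linarith

lemma stripR_uniform (hd : 0 < d) (y : Pt d) :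
    stripR d c K i0 K y ≤ 1 - ((2 * d : ℕ) : ℝ)⁻¹ ^ K := by
  have hinv0 : (0:ℝ) ≤ ((2 * d : ℕ) : ℝ)⁻¹ := by positivity
  have hinv1 : ((2 * d : ℕ) : ℝ)⁻¹ ≤ 1 := by
    rw [inv_le_one_iff₀]
    right
    exact_mod_cast Nat.one_le_iff_ne_zero.mpr (by omega)
  by_cases hint : 1 ≤ c - y i0 ∧ c - y i0 ≤ (K:ℤ) - 1
  · have hdep : (c - y i0).toNat ≤ K := by omega
    calc stripR d c K i0 K y ≤ 1 - ((2 * d : ℕ) : ℝ)⁻¹ ^ (c - y i0).toNat :=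
          stripR_exit hd K y hdep
      _ ≤ 1 - ((2 * d : ℕ) : ℝ)⁻¹ ^ K := by
          have := pow_le_pow_of_le_one hinv0 hinv1 hdep
          linarith
  · rw [stripR_boundary hint]
    have : ((2 * d : ℕ) : ℝ)⁻¹ ^ K ≤ 1 := pow_le_one₀ hinv0 hinv1
    linarith

lemma stripR_comp {b : ℕ} {β : ℝ} (hβ : ∀ z, stripR d c K i0 b z ≤ β) (hβ0 : 0 ≤ β) :
    ∀ (a : ℕ) (y : Pt d), stripR d c K i0 (a + b) y ≤ stripR d c K i0 a y * β := by
  intro a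
  induction a with
  | zero =>
    intro y
    by_cases hint : 1 ≤ c - y i0 ∧ c - y i0 ≤ (K:ℤ) - 1
    · rw [show stripR d c K i0 0 y = 1 from by rw [stripR, if_pos hint], one_mul,
        Nat.zero_add]
      exact hβ y
    · rw [stripR_boundary hint, stripR_boundary hint, zero_mul]
  | succ a ih =>
    intro y
    have hshift : a + 1 + b = (a + b) + 1 := by omega
    by_cases hint : 1 ≤ c - y i0 ∧ c - y i0 ≤ (K:ℤ) - 1
    · rw [hshift, stripR_succ_interior hint, stripR_succ_interior hint]
      rw [mul_assoc]
      refine mul_le_mul_of_nonneg_left ?_ (by positivity)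
      rw [Finset.sum_mul]
      exact Finset.sum_le_sum fun e _ => ih (y + e)
    · rw [stripR_boundary hint, stripR_boundary hint, zero_mul]

lemma stripR_geo (hd : 0 < d) (T : ℕ) :
    ∀ (j : ℕ) (y : Pt d),
      stripR d c K i0 (T + j * K) y ≤ (1 - ((2 * d : ℕ) : ℝ)⁻¹ ^ K) ^ j := by
  have hinv0 : (0:ℝ) ≤ ((2 * d : ℕ) : ℝ)⁻¹ := by positivity
  have hinv1 : ((2 * d : ℕ) : ℝ)⁻¹ ≤ 1 := by
    rw [inv_le_one_iff₀]
    right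
    exact_mod_cast Nat.one_le_iff_ne_zero.mpr (by omega)
  have hβ0 : (0:ℝ) ≤ 1 - ((2 * d : ℕ) : ℝ)⁻¹ ^ K := by
    have : ((2 * d : ℕ) : ℝ)⁻¹ ^ K ≤ 1 := pow_le_one₀ hinv0 hinv1
    linarith
  intro j
  induction j with
  | zero =>
    intro y
    simpa using stripR_le_one hd T y
  | succ j ih =>
    intro y
    have harr : T + (j + 1) * K = (T + j * K) + K := by ring
    rw [harr, pow_succ]
    calc stripR d c K i0 ((T + j * K) + K) y
        ≤ stripR d c K i0 (T + j * K) y * (1 - ((2 * d : ℕ) : ℝ)⁻¹ ^ K) :=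
          stripR_comp (fun z => stripR_uniform hd z) hβ0 _ y
      _ ≤ (1 - ((2 * d : ℕ) : ℝ)⁻¹ ^ K) ^ j * (1 - ((2 * d : ℕ) : ℝ)⁻¹ ^ K) :=
          mul_le_mul_of_nonneg_right (ih y) hβ0

end StripR
section MainStrip
variable {d : ℕ}

lemma main_strip (hd5 : 5 ≤ d) (A B : Finset (Pt d)) (hAB : Disjoint A B)
    (i0 : Fin d) (x : Pt d) (hA : ∀ a ∈ A, x i0 ≤ a i0) (K : ℕ) (hK : 2 ≤ K)
    (hKn : 144 * (((A ∪ B).card : ℕ) : ℝ) ≤ (K:ℝ)^2) :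
    ∀ (t : ℕ) (y : Pt d), 0 ≤ x i0 - y i0 → x i0 - y i0 ≤ (K:ℤ) →
      ((x i0 - y i0 : ℤ) : ℝ)/(K:ℝ) * (1 - 36*(((A ∪ B).card : ℕ) : ℝ)/(K:ℝ)^2)
          - (∑ b ∈ B, phi (y - b)) - stripR d (x i0) K i0 t y
        ≤ walkF d (A ∪ B) t y := by
  have hd0 : 0 < d := by omega
  have h2d : (0:ℝ) < ((2 * d : ℕ) : ℝ) := by positivity
  have hK0 : (0:ℝ) < (K:ℝ) := by exact_mod_cast (by omega : 0 < K)
  have hn0 : (0:ℝ) ≤ (((A ∪ B).card : ℕ) : ℝ) := by positivity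
  have h36 : 36 * (((A ∪ B).card : ℕ) : ℝ)/(K:ℝ)^2 ≤ 1/4 := by
    rw [div_le_iff₀ (by positivity)]
    nlinarith
  have hα34 : 3/4 ≤ 1 - 36*(((A ∪ B).card : ℕ) : ℝ)/(K:ℝ)^2 := by linarith
  have hα1 : 1 - 36*(((A ∪ B).card : ℕ) : ℝ)/(K:ℝ)^2 ≤ 1 := by
    have : 0 ≤ 36 * (((A ∪ B).card : ℕ) : ℝ)/(K:ℝ)^2 := by positivity
    linarith
  intro t
  induction t with
  | zero =>
    intro y h0 hKd
    have hD1 : ((x i0 - y i0 : ℤ) : ℝ)/(K:ℝ) ≤ 1 := by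
      rw [div_le_one hK0]
      exact_mod_cast hKd
    have hD0 : 0 ≤ ((x i0 - y i0 : ℤ) : ℝ)/(K:ℝ) :=
      div_nonneg (by exact_mod_cast h0) hK0.le
    have hprod : ((x i0 - y i0 : ℤ) : ℝ)/(K:ℝ)
        * (1 - 36*(((A ∪ B).card : ℕ) : ℝ)/(K:ℝ)^2) ≤ 1 := by
      nlinarith
    have hΦ : 0 ≤ ∑ b ∈ B, phi (y - b) := Finset.sum_nonneg fun b _ => phi_nonneg _
    have hR := stripR_nonneg (d := d) (c := x i0) (K := K) (i0 := i0) 0 y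
    have hw : walkF d (A ∪ B) 0 y = 1 := rfl
    linarith
  | succ t ih =>
    intro y h0 hKd
    have hΦ : 0 ≤ ∑ b ∈ B, phi (y - b) := Finset.sum_nonneg fun b _ => phi_nonneg _
    have hR := stripR_nonneg (d := d) (c := x i0) (K := K) (i0 := i0) (t+1) y
    have hw := walkF_nonneg (A ∪ B) (t+1) y
    rcases eq_or_lt_of_le h0 with hdep0 | hdep1
    · have hcast : ((x i0 - y i0 : ℤ) : ℝ) = 0 := by
        rw [← hdep0]
        norm_num
      rw [hcast]
      simp only [zero_div, zero_mul]
      linarith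
    · by_cases hyB : y ∈ B
      · have hφ1 : 1 ≤ ∑ b ∈ B, phi (y - b) := by
          have := Finset.single_le_sum (f := fun b => phi (y - b))
            (fun b _ => phi_nonneg _) hyB
          simp only [sub_self, phi_zero] at this
          exact this
        have hD1 : ((x i0 - y i0 : ℤ) : ℝ)/(K:ℝ) ≤ 1 := by
          rw [div_le_one hK0]
          exact_mod_cast hKd
        have hD0 : 0 ≤ ((x i0 - y i0 : ℤ) : ℝ)/(K:ℝ) :=
          div_nonneg (by exact_mod_cast h0) hK0.le
        have hprod : ((x i0 - y i0 : ℤ) : ℝ)/(K:ℝ)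
            * (1 - 36*(((A ∪ B).card : ℕ) : ℝ)/(K:ℝ)^2) ≤ 1 := by
          nlinarith
        linarith
      · rcases eq_or_lt_of_le hKd with hdepK | hdepK'
        · -- deep boundary
          have hyA : y ∉ A := fun hyA => by
            have := hA y hyA
            omega
          have hyW : y ∉ A ∪ B := by
            rw [Finset.mem_union]
            rintro (h | h)
            · exact hyA h
            · exact hyB h
          have hhit := walkF_ge_one_sub_sum_phi hd5 (A ∪ B) (t+1) hyW
          have hsplit : ∑ w ∈ A ∪ B, phi (y - w)
              = ∑ a ∈ A, phi (y - a) + ∑ b ∈ B, phi (y - b) := Finset.sum_union hAB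
          have hAbound : ∑ a ∈ A, phi (y - a)
              ≤ (((A ∪ B).card : ℕ) : ℝ) * (36/(K:ℝ)^2) := by
            have hper : ∀ a ∈ A, phi (y - a) ≤ 36/(K:ℝ)^2 := by
              intro a ha
              have hcoord : (y - a) i0 ≤ -(K:ℤ) := by
                rw [Pi.sub_apply]
                have := hA a ha
                omega
              have hsq : (K:ℤ)^2 ≤ ((y - a) i0)^2 := by nlinarith
              have hqb : (K:ℤ)^2 ≤ qZ (y - a) := hsq.trans (sq_le_qZ _ i0)
              have hne : y - a ≠ 0 := by
                rw [qZ_ne_zero_iff]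
                have : (0:ℤ) < (K:ℤ)^2 := by positivity
                omega
              calc phi (y - a) ≤ 36 / ((qZ (y - a) : ℤ) : ℝ) := phi_le hne
                _ ≤ 36/(K:ℝ)^2 := by
                    have h1 : ((K:ℝ))^2 ≤ ((qZ (y - a) : ℤ) : ℝ) := by
                      exact_mod_cast hqb
                    have h2 : (0:ℝ) < (K:ℝ)^2 := by positivity
                    gcongr
            calc ∑ a ∈ A, phi (y - a) ≤ ∑ a ∈ A, 36/(K:ℝ)^2 :=
                  Finset.sum_le_sum hper
              _ = (A.card : ℝ) * (36/(K:ℝ)^2) := by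
                  rw [Finset.sum_const, nsmul_eq_mul]
              _ ≤ (((A ∪ B).card : ℕ) : ℝ) * (36/(K:ℝ)^2) := by
                  have : (A.card : ℝ) ≤ (((A ∪ B).card : ℕ) : ℝ) := by
                    exact_mod_cast Finset.card_le_card Finset.subset_union_left
                  have h2 : (0:ℝ) ≤ 36/(K:ℝ)^2 := by positivity
                  nlinarith
          have hterm : ((x i0 - y i0 : ℤ) : ℝ)/(K:ℝ) = 1 := by
            rw [hdepK]
            push_cast
            field_simp
          rw [hterm, one_mul]
          have hcA : (((A ∪ B).card : ℕ) : ℝ) * (36/(K:ℝ)^2)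
              = 36*(((A ∪ B).card : ℕ) : ℝ)/(K:ℝ)^2 := by ring
          linarith
        · -- interior
          have hint : 1 ≤ x i0 - y i0 ∧ x i0 - y i0 ≤ (K:ℤ) - 1 := ⟨hdep1, by omega⟩
          have hedge : ∀ e ∈ dirsF d,
              ((x i0 - (y + e : Pt d) i0 : ℤ):ℝ)/(K:ℝ)
                  * (1 - 36*(((A ∪ B).card : ℕ) : ℝ)/(K:ℝ)^2)
                - (∑ b ∈ B, phi ((y + e) - b))
                - stripR d (x i0) K i0 t (y + e)
              ≤ (if y + e ∈ A ∪ B then 0 else walkF d (A ∪ B) t (y + e)) := by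
            intro e he
            have hrange : -1 ≤ e i0 ∧ e i0 ≤ 1 := by
              rcases dirsF_apply_abs he i0 with h | h | h <;> omega
            have hadd : (y + e : Pt d) i0 = y i0 + e i0 := rfl
            have hdep_e0 : 0 ≤ x i0 - (y + e : Pt d) i0 := by
              rw [hadd]
              omega
            have hdep_eK : x i0 - (y + e : Pt d) i0 ≤ (K:ℤ) := by
              rw [hadd]
              omega
            have hΦe : 0 ≤ ∑ b ∈ B, phi ((y + e) - b) :=
              Finset.sum_nonneg fun b _ => phi_nonneg _
            have hRe := stripR_nonneg (d := d) (c := x i0) (K := K) (i0 := i0) t (y + e)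
            by_cases heW : y + e ∈ A ∪ B
            · rw [if_pos heW]
              rcases Finset.mem_union.mp heW with heA | heB
              · have hle : x i0 - (y + e : Pt d) i0 ≤ 0 := by
                  have := hA _ heA
                  omega
                have hz : ((x i0 - (y + e : Pt d) i0 : ℤ):ℝ) = 0 := by
                  have : x i0 - (y + e : Pt d) i0 = 0 := le_antisymm hle hdep_e0
                  rw [this]
                  norm_num
                rw [hz]
                simp only [zero_div, zero_mul]
                linarith
              · have hφ1 : 1 ≤ ∑ b ∈ B, phi ((y + e) - b) := by
                  have := Finset.single_le_sum (f := fun b => phi ((y + e) - b))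
                    (fun b _ => phi_nonneg _) heB
                  simp only [sub_self, phi_zero] at this
                  exact this
                have hD1 : ((x i0 - (y + e : Pt d) i0 : ℤ):ℝ)/(K:ℝ) ≤ 1 := by
                  rw [div_le_one hK0]
                  exact_mod_cast hdep_eK
                have hD0 : 0 ≤ ((x i0 - (y + e : Pt d) i0 : ℤ):ℝ)/(K:ℝ) :=
                  div_nonneg (by exact_mod_cast hdep_e0) hK0.le
                have hprod : ((x i0 - (y + e : Pt d) i0 : ℤ):ℝ)/(K:ℝ)
                    * (1 - 36*(((A ∪ B).card : ℕ) : ℝ)/(K:ℝ)^2) ≤ 1 := by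
                  nlinarith
                linarith
            · rw [if_neg heW]
              exact ih (y + e) hdep_e0 hdep_eK
          have hI1 : ∑ e ∈ dirsF d, ((x i0 - (y + e : Pt d) i0 : ℤ):ℝ)
              = ((2 * d : ℕ) : ℝ) * ((x i0 - y i0 : ℤ):ℝ) := by
            have hz : ∑ e ∈ dirsF d, (x i0 - (y + e : Pt d) i0)
                = (2 * d : ℤ) * (x i0 - y i0) := by
              have hc : ∀ e ∈ dirsF d, x i0 - (y + e : Pt d) i0
                  = (x i0 - y i0) - e i0 := fun e _ => by
                have : (y + e : Pt d) i0 = y i0 + e i0 := rfl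
                rw [this]
                ring
              rw [Finset.sum_congr rfl hc, Finset.sum_sub_distrib, sum_dirsF_apply,
                Finset.sum_const, card_dirsF, sub_zero, nsmul_eq_mul]
              push_cast
              ring
            rw [← Int.cast_sum, hz]
            push_cast
            ring
          have hI3 : stripR d (x i0) K i0 (t+1) y
              = ((2 * d : ℕ) : ℝ)⁻¹ * ∑ e ∈ dirsF d, stripR d (x i0) K i0 t (y + e) :=
            stripR_succ_interior hint
          have hI2 : ((2 * d : ℕ) : ℝ)⁻¹
              * (∑ e ∈ dirsF d, ∑ b ∈ B, phi ((y + e) - b)) ≤ ∑ b ∈ B, phi (y - b) := by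
            rw [Finset.sum_comm, Finset.mul_sum]
            refine Finset.sum_le_sum fun b hb => ?_
            have hne : y - b ≠ 0 := sub_ne_zero.mpr (fun h => hyB (h ▸ hb))
            have hsh := phi_superharm hd5 hne
            have harr : ∀ e ∈ dirsF d, phi ((y - b) + e) = phi ((y + e) - b) := by
              intro e _
              congr 1
              abel
            rwa [Finset.sum_congr rfl harr] at hsh
          have hsum := Finset.sum_le_sum hedge
          have hexp : ∑ e ∈ dirsF d,
              (((x i0 - (y + e : Pt d) i0 : ℤ):ℝ)/(K:ℝ)
                  * (1 - 36*(((A ∪ B).card : ℕ) : ℝ)/(K:ℝ)^2)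
                - (∑ b ∈ B, phi ((y + e) - b))
                - stripR d (x i0) K i0 t (y + e))
              = (∑ e ∈ dirsF d, ((x i0 - (y + e : Pt d) i0 : ℤ):ℝ))/(K:ℝ)
                  * (1 - 36*(((A ∪ B).card : ℕ) : ℝ)/(K:ℝ)^2)
                - (∑ e ∈ dirsF d, ∑ b ∈ B, phi ((y + e) - b))
                - (∑ e ∈ dirsF d, stripR d (x i0) K i0 t (y + e)) := by
            rw [Finset.sum_sub_distrib, Finset.sum_sub_distrib, ← Finset.sum_mul,
              ← Finset.sum_div]
          have hfield : ((2 * d : ℕ) : ℝ)⁻¹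
              * ((((2 * d : ℕ) : ℝ) * ((x i0 - y i0 : ℤ):ℝ))/(K:ℝ)
                * (1 - 36*(((A ∪ B).card : ℕ) : ℝ)/(K:ℝ)^2))
              = ((x i0 - y i0 : ℤ):ℝ)/(K:ℝ)
                * (1 - 36*(((A ∪ B).card : ℕ) : ℝ)/(K:ℝ)^2) := by
            have hm : ((2 * d : ℕ) : ℝ) ≠ 0 := h2d.ne'
            calc ((2 * d : ℕ) : ℝ)⁻¹
                * ((((2 * d : ℕ) : ℝ) * ((x i0 - y i0 : ℤ):ℝ))/(K:ℝ)
                  * (1 - 36*(((A ∪ B).card : ℕ) : ℝ)/(K:ℝ)^2))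
                = (((2 * d : ℕ) : ℝ)⁻¹ * ((2 * d : ℕ) : ℝ))
                  * (((x i0 - y i0 : ℤ):ℝ)/(K:ℝ)
                    * (1 - 36*(((A ∪ B).card : ℕ) : ℝ)/(K:ℝ)^2)) := by ring
              _ = ((x i0 - y i0 : ℤ):ℝ)/(K:ℝ)
                    * (1 - 36*(((A ∪ B).card : ℕ) : ℝ)/(K:ℝ)^2) := by
                  rw [inv_mul_cancel₀ hm, one_mul]
          have hwalk : walkF d (A ∪ B) (t+1) y = ((2 * d : ℕ) : ℝ)⁻¹
              * ∑ e ∈ dirsF d, (if y + e ∈ A ∪ B then 0 else walkF d (A ∪ B) t (y + e)) :=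
            rfl
          have hmul := mul_le_mul_of_nonneg_left hsum
            (by positivity : (0:ℝ) ≤ ((2 * d : ℕ) : ℝ)⁻¹)
          rw [hexp] at hmul
          rw [mul_sub, mul_sub, hI1, hfield] at hmul
          rw [hwalk, hI3]
          linarith
end MainStrip

section Assembly
variable {d : ℕ}

lemma bdd_prob_range (W : Set (Pt d)) (x : Pt d) : BddBelow (Set.range fun T : ℕ =>
    prob d T (fun s => ∀ t, 1 ≤ t → t ≤ T → wpos d x s t ∉ W)) := by
  refine ⟨0, ?_⟩
  rintro r ⟨T, rfl⟩
  exact prob_nonneg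

lemma esc_eq_iInf (W : Finset (Pt d)) {x : Pt d} (hx : x ∈ W) :
    esc d (↑W) x = ⨅ T : ℕ, walkF d W T x := by
  unfold esc
  rw [if_pos (show x ∈ (↑W : Set (Pt d)) from hx)]
  exact iInf_congr fun T => prob_avoid W T x

lemma esc_nonneg (W : Set (Pt d)) (z : Pt d) : 0 ≤ esc d W z := by
  unfold esc
  split
  · exact le_ciInf fun T => prob_nonneg
  · rfl

lemma esc_le_one (W : Set (Pt d)) (z : Pt d) : esc d W z ≤ 1 := by
  unfold esc
  split
  · refine (ciInf_le (bdd_prob_range W z) 0).trans ?_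
    rw [prob_zero_true (fun s t h1 h2 => absurd (h1.trans h2) (by omega))]
  · norm_num

lemma capa_eq_sum (W : Finset (Pt d)) : capa d ↑W = ∑ z ∈ W, esc d ↑W z := by
  unfold capa
  exact Finset.tsum_subtype' W (esc d ↑W)

lemma capa_le (W : Finset (Pt d)) : capa d ↑W ≤ (W.card : ℝ) := by
  rw [capa_eq_sum]
  calc ∑ z ∈ W, esc d ↑W z ≤ ∑ _z ∈ W, (1:ℝ) :=
        Finset.sum_le_sum fun z _ => esc_le_one _ _
    _ = (W.card : ℝ) := by rw [Finset.sum_const, nsmul_eq_mul, mul_one]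

lemma capa_ge_esc (W : Finset (Pt d)) {x : Pt d} (hx : x ∈ W) :
    esc d ↑W x ≤ capa d ↑W := by
  rw [capa_eq_sum]
  exact Finset.single_le_sum (f := fun z => esc d ↑W z)
    (fun z _ => esc_nonneg _ _) hx

set_option maxHeartbeats 2000000 in
lemma esc_lower (hd5 : 5 ≤ d) (A B : Finset (Pt d)) (hAB : Disjoint A B)
    (x : Pt d) (hxA : x ∈ A)
    (hA : ∀ a ∈ A, x ⟨0, by omega⟩ ≤ a ⟨0, by omega⟩)
    (K : ℕ) (hK : 12 ≤ K)
    (hKn : 144 * (((A ∪ B).card : ℕ) : ℝ) ≤ (K:ℝ)^2)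
    (hB : ∀ b ∈ B, (288 : ℝ) * (((A ∪ B).card : ℕ) : ℝ) * (K:ℝ)
        ≤ ((qZ (x + Pi.single ⟨0, by omega⟩ (-1) - b) : ℤ) : ℝ)) :
    5/(16*(d:ℝ)*(K:ℝ)) ≤ esc d (↑(A ∪ B)) x := by
  have hd0 : 0 < d := by omega
  set i0 : Fin d := ⟨0, by omega⟩ with hi0
  have h2d : (0:ℝ) < ((2 * d : ℕ) : ℝ) := by positivity
  have hK0 : (0:ℝ) < (K:ℝ) := by exact_mod_cast (by omega : 0 < K)
  have hn0 : (0:ℝ) ≤ (((A ∪ B).card : ℕ) : ℝ) := by positivity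
  have hxW : x ∈ A ∪ B := Finset.mem_union_left B hxA
  have hn1 : (1:ℝ) ≤ (((A ∪ B).card : ℕ) : ℝ) := by
    have : 1 ≤ (A ∪ B).card := Finset.card_pos.mpr ⟨x, hxW⟩
    exact_mod_cast this
  set eNeg : Pt d := Pi.single i0 (-1 : ℤ) with heNeg
  have heNegMem : eNeg ∈ dirsF d := single_neg_mem_dirsF i0
  have heNegApp : (eNeg : Pt d) i0 = -1 := by rw [heNeg, Pi.single_eq_same]
  have hyA : ∀ a ∈ A, (x + eNeg : Pt d) i0 < a i0 := by
    intro a ha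
    have h1 : (x + eNeg : Pt d) i0 = x i0 - 1 := by
      rw [Pi.add_apply, heNegApp]
      ring
    have := hA a ha
    omega
  have hyB : ∀ b ∈ B, x + eNeg ≠ b := by
    intro b hb hEq
    have h1 := hB b hb
    have h2 : qZ (x + eNeg - b) = 0 := by
      rw [show x + eNeg - b = 0 from by rw [hEq]; abel, qZ_zero]
    rw [h2] at h1
    have h1' : (288 : ℝ) * (((A ∪ B).card : ℕ) : ℝ) * (K:ℝ) ≤ 0 := by exact_mod_cast h1
    nlinarith
  have hyW : x + eNeg ∉ A ∪ B := by
    rw [Finset.mem_union]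
    rintro (h | h)
    · exact absurd rfl (hyA _ h).ne
    · exact hyB _ h rfl
  have hΦB : ∑ b ∈ B, phi ((x + eNeg) - b) ≤ 1/(8*(K:ℝ)) := by
    have hper : ∀ b ∈ B, phi ((x + eNeg) - b)
        ≤ 36/((288 : ℝ) * (((A ∪ B).card : ℕ) : ℝ) * (K:ℝ)) := by
      intro b hb
      have h1 := hB b hb
      have hq0 : (0:ℝ) < (288 : ℝ) * (((A ∪ B).card : ℕ) : ℝ) * (K:ℝ) := by
        nlinarith
      have hne : (x + eNeg) - b ≠ 0 := by
        rw [qZ_ne_zero_iff]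
        intro h
        rw [h] at h1
        have h1' : (288 : ℝ) * (((A ∪ B).card : ℕ) : ℝ) * (K:ℝ) ≤ 0 := by exact_mod_cast h1
        nlinarith
      calc phi ((x + eNeg) - b) ≤ 36/((qZ (x + eNeg - b) : ℤ) : ℝ) := phi_le hne
        _ ≤ 36/((288 : ℝ) * (((A ∪ B).card : ℕ) : ℝ) * (K:ℝ)) := by gcongr
    calc ∑ b ∈ B, phi ((x + eNeg) - b)
        ≤ ∑ _b ∈ B, 36/((288 : ℝ) * (((A ∪ B).card : ℕ) : ℝ) * (K:ℝ)) :=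
          Finset.sum_le_sum hper
      _ = (B.card : ℝ) * (36/((288 : ℝ) * (((A ∪ B).card : ℕ) : ℝ) * (K:ℝ))) := by
          rw [Finset.sum_const, nsmul_eq_mul]
      _ ≤ 1/(8*(K:ℝ)) := by
          have hBn : (B.card : ℝ) ≤ (((A ∪ B).card : ℕ) : ℝ) := by
            exact_mod_cast Finset.card_le_card Finset.subset_union_right
          have hD : (0:ℝ) < (288 : ℝ) * (((A ∪ B).card : ℕ) : ℝ) * (K:ℝ) := by nlinarith
          have hrw : (B.card : ℝ) * (36/((288 : ℝ) * (((A ∪ B).card : ℕ) : ℝ) * (K:ℝ)))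
              = (36*(B.card : ℝ))/((288 : ℝ) * (((A ∪ B).card : ℕ) : ℝ) * (K:ℝ)) := by
            ring
          rw [hrw, div_le_div_iff₀ hD (by positivity)]
          nlinarith
  set β : ℝ := 1 - ((2 * d : ℕ) : ℝ)⁻¹ ^ K with hβ
  have hβ0 : 0 ≤ β := by
    have h1 : ((2 * d : ℕ) : ℝ)⁻¹ ≤ 1 := by
      rw [inv_le_one_iff₀]
      right
      exact_mod_cast Nat.one_le_iff_ne_zero.mpr (by omega)
    have := pow_le_one₀ (by positivity : (0:ℝ) ≤ ((2 * d : ℕ) : ℝ)⁻¹) h1 (n := K)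
    rw [hβ]
    linarith
  have hβ1 : β < 1 := by
    rw [hβ]
    have : (0:ℝ) < ((2 * d : ℕ) : ℝ)⁻¹ ^ K := by positivity
    linarith
  have key : ∀ T j : ℕ, ((2 * d : ℕ) : ℝ)⁻¹ * (5/(8*(K:ℝ)) - β ^ j)
      ≤ walkF d (A ∪ B) T x := by
    intro T j
    have hanti := walkF_anti hd0 (A ∪ B) (show T ≤ (T + j * K) + 1 by omega) x
    refine le_trans ?_ hanti
    have hrec : walkF d (A ∪ B) ((T + j * K) + 1) x = ((2 * d : ℕ) : ℝ)⁻¹ *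
        ∑ e ∈ dirsF d, (if x + e ∈ A ∪ B then 0
          else walkF d (A ∪ B) (T + j * K) (x + e)) := rfl
    rw [hrec]
    refine mul_le_mul_of_nonneg_left ?_ (by positivity)
    have hterm : (5/(8*(K:ℝ)) - β ^ j)
        ≤ (if x + eNeg ∈ A ∪ B then 0 else walkF d (A ∪ B) (T + j * K) (x + eNeg)) := by
      rw [if_neg hyW]
      have hms := main_strip hd5 A B hAB i0 x hA K (by omega) hKn (T + j * K) (x + eNeg)
        (by
          rw [Pi.add_apply, heNegApp]
          omega)
        (by
          rw [Pi.add_apply, heNegApp]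
          omega)
      have hdep1 : ((x i0 - (x + eNeg : Pt d) i0 : ℤ) : ℝ) = 1 := by
        rw [Pi.add_apply, heNegApp]
        norm_num
      rw [hdep1] at hms
      have hα34 : 3/4 ≤ 1 - 36*(((A ∪ B).card : ℕ) : ℝ)/(K:ℝ)^2 := by
        have h36 : 36 * (((A ∪ B).card : ℕ) : ℝ)/(K:ℝ)^2 ≤ 1/4 := by
          rw [div_le_iff₀ (by positivity)]
          nlinarith
        linarith
      have hgeo := stripR_geo (c := x i0) (K := K) (i0 := i0) hd0 T j (x + eNeg)
      have h1K : 1/(K:ℝ) * (3/4) ≤ 1/(K:ℝ) * (1 - 36*(((A ∪ B).card : ℕ) : ℝ)/(K:ℝ)^2) := by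
        have : (0:ℝ) ≤ 1/(K:ℝ) := by positivity
        nlinarith
      have hcomp : 5/(8*(K:ℝ)) = 1/(K:ℝ) * (3/4) - 1/(8*(K:ℝ)) := by
        field_simp
        ring
      rw [hcomp]
      have := hΦB
      linarith
    calc 5/(8*(K:ℝ)) - β ^ j
        ≤ (if x + eNeg ∈ A ∪ B then 0 else walkF d (A ∪ B) (T + j * K) (x + eNeg)) :=
          hterm
      _ ≤ ∑ e ∈ dirsF d, (if x + e ∈ A ∪ B then 0
            else walkF d (A ∪ B) (T + j * K) (x + e)) := by
          refine Finset.single_le_sum (f := fun e => (if x + e ∈ A ∪ B then (0:ℝ)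
            else walkF d (A ∪ B) (T + j * K) (x + e))) (fun e _ => ?_) heNegMem
          split
          · rfl
          · exact walkF_nonneg _ _ _
  rw [esc_eq_iInf (A ∪ B) hxW]
  refine le_ciInf fun T => ?_
  by_contra hcon
  push_neg at hcon
  have hgap : 0 < (5/(16*(d:ℝ)*(K:ℝ)) - walkF d (A ∪ B) T x) * ((2 * d : ℕ) : ℝ) := by
    have : (0:ℝ) < 5/(16*(d:ℝ)*(K:ℝ)) - walkF d (A ∪ B) T x := by linarith
    positivity
  obtain ⟨j, hj⟩ := exists_pow_lt_of_lt_one hgap hβ1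
  have hkey := key T j
  have hval : ((2 * d : ℕ) : ℝ)⁻¹ * (5/(8*(K:ℝ))) = 5/(16*(d:ℝ)*(K:ℝ)) := by
    have hd' : ((d:ℝ)) ≠ 0 := by positivity
    push_cast
    field_simp
    ring
  have hβj : ((2 * d : ℕ) : ℝ)⁻¹ * β ^ j < 5/(16*(d:ℝ)*(K:ℝ)) - walkF d (A ∪ B) T x := by
    rw [inv_mul_lt_iff₀ h2d]
    calc β ^ j < (5/(16*(d:ℝ)*(K:ℝ)) - walkF d (A ∪ B) T x) * ((2 * d : ℕ) : ℝ) := hj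
      _ = ((2 * d : ℕ) : ℝ) * (5/(16*(d:ℝ)*(K:ℝ)) - walkF d (A ∪ B) T x) := by ring
  rw [mul_sub, hval] at hkey
  linarith

end Assembly

set_option maxHeartbeats 1000000

/-- **Harmonic measure of lex elements.** Let `d ≥ 5`. There are `r = r(n,d)` and
`c = c(d) > 0` such that if `A ∪ B` is an `n`-element subset of `ℤ^d` with
`dist(A,B) ≥ r` and `x` is lex in `A`, then `esc_{A∪B}(x) ≥ c n^{−1/(d−2) − 0.8}` and
`H_{A∪B}(x) ≥ c n^{−2.2}`. -/
theorem lex_harm (d : ℕ) (hd : 5 ≤ d) :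
    ∃ c : ℝ, 0 < c ∧ ∀ n : ℕ, ∃ r : ℝ,
      ∀ A B : Finset (Pt d), Disjoint A B → (A ∪ B).card = n →
        r ≤ setDist d A B →
        ∀ x : Pt d, IsLex d A x →
          c * (n : ℝ) ^ (-(1 / ((d : ℝ) - 2)) - 0.8) ≤ esc d (↑(A ∪ B)) x ∧
          c * (n : ℝ) ^ (-(2.2 : ℝ)) ≤ harm d (↑(A ∪ B)) x := by
  have hd0 : 0 < d := by omega
  have hdR : (5:ℝ) ≤ (d:ℝ) := by exact_mod_cast hd
  refine ⟨5/(576*(d:ℝ)), by positivity, fun n => ?_⟩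
  set K : ℕ := 12 * (⌈(n:ℝ) ^ (0.8:ℝ)⌉₊ + 1) with hKdef
  refine ⟨1 + 288*((n:ℝ)+1)*(K:ℝ), ?_⟩
  intro A B hAB hcard hdist x hx
  obtain ⟨hxA, hlex⟩ := hx
  have hxW : x ∈ A ∪ B := Finset.mem_union_left B hxA
  have hn1 : 1 ≤ n := by
    rw [← hcard]
    exact Finset.card_pos.mpr ⟨x, hxW⟩
  have hn1R : (1:ℝ) ≤ (n:ℝ) := by exact_mod_cast hn1
  have hnpos : (0:ℝ) < (n:ℝ) := by linarith
  -- K facts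
  have hx08_1 : (1:ℝ) ≤ (n:ℝ) ^ (0.8:ℝ) := by
    have := Real.rpow_le_rpow_of_exponent_le hn1R (by norm_num : (0:ℝ) ≤ 0.8)
    rwa [Real.rpow_zero] at this
  have hx08_0 : (0:ℝ) < (n:ℝ) ^ (0.8:ℝ) := by linarith
  have hceil_ge : (n:ℝ) ^ (0.8:ℝ) ≤ (⌈(n:ℝ) ^ (0.8:ℝ)⌉₊ : ℝ) := Nat.le_ceil _
  have hceil_le : (⌈(n:ℝ) ^ (0.8:ℝ)⌉₊ : ℝ) ≤ (n:ℝ) ^ (0.8:ℝ) + 1 :=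
    (Nat.ceil_lt_add_one hx08_0.le).le
  have hKR : (K:ℝ) = 12 * ((⌈(n:ℝ) ^ (0.8:ℝ)⌉₊ : ℝ) + 1) := by
    rw [hKdef]
    push_cast
    ring
  have hKlb : 12 * ((n:ℝ) ^ (0.8:ℝ)) ≤ (K:ℝ) := by
    rw [hKR]
    linarith
  have hKub : (K:ℝ) ≤ 36 * ((n:ℝ) ^ (0.8:ℝ)) := by
    rw [hKR]
    linarith
  have hK12 : 12 ≤ K := by
    rw [hKdef]
    omega
  have hK0R : (0:ℝ) < (K:ℝ) := by
    have : 0 < K := by omega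
    exact_mod_cast this
  have hsq16 : ((n:ℝ) ^ (0.8:ℝ)) * ((n:ℝ) ^ (0.8:ℝ)) = (n:ℝ) ^ (1.6:ℝ) := by
    rw [← Real.rpow_add hnpos]
    norm_num
  have h16ge : (n:ℝ) ≤ (n:ℝ) ^ (1.6:ℝ) := by
    have := Real.rpow_le_rpow_of_exponent_le hn1R (by norm_num : (1:ℝ) ≤ 1.6)
    rwa [Real.rpow_one] at this
  have hKn' : 144 * (((A ∪ B).card : ℕ) : ℝ) ≤ (K:ℝ)^2 := by
    rw [hcard]
    nlinarith
  set i0 : Fin d := ⟨0, by omega⟩ with hi0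
  have hA : ∀ a ∈ A, x i0 ≤ a i0 := by
    intro a ha
    rcases eq_or_ne a x with rfl | hne
    · exact le_rfl
    · obtain ⟨i, hji, hlt⟩ := hlex a ha hne
      rcases eq_or_ne i i0 with rfl | hii
      · exact hlt.le
      · have hvi : (i : ℕ) ≠ 0 := by
          intro h
          exact hii (Fin.ext (by rw [h]))
        have hlt0 : i0 < i := by
          rw [Fin.lt_def]
          have : (i0 : ℕ) = 0 := rfl
          omega
        rw [hji i0 hlt0]
  -- distance condition
  have hB' : ∀ b ∈ B, (288 : ℝ) * (((A ∪ B).card : ℕ) : ℝ) * (K:ℝ)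
      ≤ ((qZ (x + Pi.single i0 (-1) - b) : ℤ) : ℝ) := by
    intro b hb
    have hbdd : BddBelow {r : ℝ | ∃ x ∈ A, ∃ y ∈ B, r = dist0 d x y} := by
      refine ⟨0, ?_⟩
      rintro r ⟨x', _, y', _, rfl⟩
      exact Real.sqrt_nonneg _
    have hmem : dist0 d x b ∈ {r : ℝ | ∃ x ∈ A, ∃ y ∈ B, r = dist0 d x y} :=
      ⟨x, hxA, b, hb, rfl⟩
    have hdb : 1 + 288*((n:ℝ)+1)*(K:ℝ) ≤ dist0 d x b :=
      le_trans hdist (csInf_le hbdd hmem)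
    have hq0 : (0:ℝ) ≤ ((qZ (x - b) : ℤ) : ℝ) := by exact_mod_cast qZ_nonneg (x - b)
    have hdist_eq : dist0 d x b = Real.sqrt ((qZ (x - b) : ℤ) : ℝ) := by
      unfold dist0
      congr 1
      unfold qZ
      push_cast
      refine Finset.sum_congr rfl fun i _ => ?_
      rw [Pi.sub_apply]
      push_cast
      ring
    have hZ : qZ (x + Pi.single i0 (-1) - b) = qZ (x - b) - 2 * ((x - b) i0) + 1 := by
      have harr : x + Pi.single i0 (-1) - b = (x - b) + Pi.single i0 (-1) := by abel
      rw [harr, qZ_add_single]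
      ring
    have hw2 : (((x - b) i0 : ℤ) : ℝ)^2 ≤ ((qZ (x - b) : ℤ) : ℝ) := by
      exact_mod_cast sq_le_qZ (x - b) i0
    set s : ℝ := Real.sqrt ((qZ (x - b) : ℤ) : ℝ) with hs
    have hs2 : s^2 = ((qZ (x - b) : ℤ) : ℝ) := Real.sq_sqrt hq0
    have hwle : (((x - b) i0 : ℤ) : ℝ) ≤ s := by
      calc (((x - b) i0 : ℤ) : ℝ) ≤ |(((x - b) i0 : ℤ) : ℝ)| := le_abs_self _
        _ = Real.sqrt ((((x - b) i0 : ℤ) : ℝ)^2) := (Real.sqrt_sq_eq_abs _).symm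
        _ ≤ s := Real.sqrt_le_sqrt hw2
    have hsge : 1 + 288*((n:ℝ)+1)*(K:ℝ) ≤ s := by
      rw [hdist_eq] at hdb
      exact hdb
    have hcast : ((qZ (x + Pi.single i0 (-1) - b) : ℤ) : ℝ)
        = ((qZ (x - b) : ℤ) : ℝ) - 2 * (((x - b) i0 : ℤ) : ℝ) + 1 := by
      rw [hZ]
      push_cast
      ring
    rw [hcast, hcard]
    have ha1 : (1:ℝ) ≤ 288*((n:ℝ)+1)*(K:ℝ) := by nlinarith
    have h2 : 288*((n:ℝ)+1)*(K:ℝ) ≤ s - 1 := by linarith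
    have h3 : (288*((n:ℝ)+1)*(K:ℝ))^2 ≤ (s-1)^2 := by nlinarith
    nlinarith [hwle, hs2]
  have hesc := esc_lower hd A B hAB x hxA hA K hK12 hKn' hB'
  -- esc bound
  have hstepA : 5/(576*(d:ℝ)) * (n:ℝ) ^ (-(0.8:ℝ)) ≤ 5/(16*(d:ℝ)*(K:ℝ)) := by
    rw [Real.rpow_neg hnpos.le]
    have hrw : 5/(576*(d:ℝ)) * ((n:ℝ) ^ (0.8:ℝ))⁻¹
        = 5/(576*(d:ℝ)*((n:ℝ) ^ (0.8:ℝ))) := by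
      field_simp
    rw [hrw, div_le_div_iff₀ (by positivity) (by positivity)]
    nlinarith
  have hexp1 : (n:ℝ) ^ (-(1 / ((d : ℝ) - 2)) - 0.8) ≤ (n:ℝ) ^ (-(0.8:ℝ)) := by
    refine Real.rpow_le_rpow_of_exponent_le hn1R ?_
    have hd2 : (0:ℝ) < (d:ℝ) - 2 := by linarith
    have : (0:ℝ) ≤ 1 / ((d:ℝ) - 2) := by positivity
    linarith
  have hescA : 5/(576*(d:ℝ)) * (n : ℝ) ^ (-(1 / ((d : ℝ) - 2)) - 0.8)
      ≤ esc d (↑(A ∪ B)) x := by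
    calc 5/(576*(d:ℝ)) * (n : ℝ) ^ (-(1 / ((d : ℝ) - 2)) - 0.8)
        ≤ 5/(576*(d:ℝ)) * (n:ℝ) ^ (-(0.8:ℝ)) := by
          refine mul_le_mul_of_nonneg_left hexp1 (by positivity)
      _ ≤ 5/(16*(d:ℝ)*(K:ℝ)) := hstepA
      _ ≤ esc d (↑(A ∪ B)) x := hesc
  refine ⟨hescA, ?_⟩
  -- harm bound
  have hcapa_le : capa d ↑(A ∪ B) ≤ ((A ∪ B).card : ℝ) := capa_le (A ∪ B)
  have hcapa_len : capa d ↑(A ∪ B) ≤ (n:ℝ) := by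
    rw [← hcard]
    exact_mod_cast hcapa_le
  have hesc_pos : 0 < esc d (↑(A ∪ B)) x := lt_of_lt_of_le (by positivity) hesc
  have hcapa_pos : 0 < capa d ↑(A ∪ B) :=
    lt_of_lt_of_le hesc_pos (capa_ge_esc (A ∪ B) hxW)
  have hharm : esc d (↑(A ∪ B)) x / (n:ℝ) ≤ harm d (↑(A ∪ B)) x := by
    unfold harm
    gcongr
  have hfinal : 5/(576*(d:ℝ)) * (n : ℝ) ^ (-(2.2:ℝ)) ≤ esc d (↑(A ∪ B)) x / (n:ℝ) := by
    have hstep : 5/(576*(d:ℝ)) * (n:ℝ) ^ (-(0.8:ℝ)) / (n:ℝ) ≤ esc d (↑(A ∪ B)) x / (n:ℝ) := by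
      gcongr
      exact (hstepA.trans hesc)
    refine le_trans ?_ hstep
    have hrw : 5/(576*(d:ℝ)) * (n:ℝ) ^ (-(0.8:ℝ)) / (n:ℝ)
        = 5/(576*(d:ℝ)) * ((n:ℝ) ^ (-(0.8:ℝ)) * ((n:ℝ) ^ (-(1:ℝ)))) := by
      rw [Real.rpow_neg_one]
      ring
    rw [hrw, ← Real.rpow_add hnpos]
    have hexp2 : (n:ℝ) ^ (-(2.2:ℝ)) ≤ (n:ℝ) ^ (-(0.8:ℝ) + -(1:ℝ)) := by
      refine Real.rpow_le_rpow_of_exponent_le hn1R (by norm_num)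
    refine mul_le_mul_of_nonneg_left hexp2 (by positivity)
  exact le_trans hfinal hharm


end HATFormal
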